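/- arXiv:1202.5945 — 4 statements merged into one kernel-verified Lean document; each statement's English description precedes it below -/
import Mathlib

section
/- Let d ≥ 1, let V ⊂ ℝ^d be a finite point set, let r > 0, and let MST^r(V) denote the graph on vertex set V whose edge set consists of those edges of a minimum spanning tree MST(V) whose Euclidean length lies in the interval (r, 2r]. Then for every point x ∈ ℝ^d, the interference at x satisfies I(x, MST^r(V)) < 2·30^d. -/
open MeasureTheory Filter
open Metric
open scoped ENNReal
open scoped Classical

noncomputable section

/-- Points in `d`-dimensional Euclidean space. -/
abbrev Pt (d : ℕ) : Type := EuclideanSpace ℝ (Fin d)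

/-- The transmission radius of vertex `i` in the graph `G` on the points `x`:
the distance to its furthest neighbour (`0` if `i` is isolated). -/
noncomputable def rad {d n : ℕ} (x : Fin n → Pt d) (G : SimpleGraph (Fin n)) (i : Fin n) : ℝ :=
  ((Finset.univ.filter fun j => G.Adj i j).sup fun j =>
    (⟨dist (x i) (x j), dist_nonneg⟩ : NNReal) : NNReal)

/-- The interference at a point `p` caused by the graph `G` on the points `x`:
the number of balls `B(x i, rad x G i)` containing `p`. -/
noncomputable def interAt {d n : ℕ} (x : Fin n → Pt d) (G : SimpleGraph (Fin n)) (p : Pt d) : ℕ :=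
  (Finset.univ.filter fun i => dist p (x i) ≤ rad x G i).card

/-- The (maximum receiver-centric) interference of `G`:
the maximum interference at a vertex. -/
noncomputable def interG {d n : ℕ} (x : Fin n → Pt d) (G : SimpleGraph (Fin n)) : ℕ :=
  Finset.univ.sup fun i => interAt x G (x i)

/-- Total Euclidean edge length of `G` on the points `x`. -/
noncomputable def tlen {d n : ℕ} (x : Fin n → Pt d) (G : SimpleGraph (Fin n)) : ℝ :=
  ∑ e ∈ G.edgeFinset, Sym2.lift ⟨fun i j => dist (x i) (x j), fun i j => dist_comm _ _⟩ e

/-- `G` is a minimum spanning tree of the points `x`: a connected graph on the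
vertex set of minimum total Euclidean edge length. -/
def IsMST {d n : ℕ} (x : Fin n → Pt d) (G : SimpleGraph (Fin n)) : Prop :=
  G.Connected ∧ ∀ H : SimpleGraph (Fin n), H.Connected → tlen x G ≤ tlen x H

/-- The subgraph of `G` keeping only edges whose Euclidean length lies in `(r, 2r]`. -/
def lengthSub {d n : ℕ} (x : Fin n → Pt d) (G : SimpleGraph (Fin n)) (r : ℝ) :
    SimpleGraph (Fin n) where
  Adj i j := G.Adj i j ∧ dist (x i) (x j) ∈ Set.Ioc r (2 * r)
  symm := by
    constructor
    intro i j h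
    exact ⟨h.1.symm, by rw [dist_comm]; exact h.2⟩
  loopless := ⟨fun i h => G.irrefl h.1⟩


open scoped RealInnerProductSpace

section Aux

variable {d n : ℕ} {x : Fin n → Pt d}

/-! ### Geometry -/

lemma midpoint_sep {E : Type*} [NormedAddCommGroup E] [InnerProductSpace ℝ E]
    {A B C D : E} {r : ℝ}
    (h1 : dist A B ≤ dist A C) (h2 : dist A B ≤ dist A D) (h3 : dist C D ≤ dist A D)
    (h4 : dist C D ≤ dist B D) (hAB : r < dist A B) (hCD : r < dist C D) (hr : 0 ≤ r) :
    r / 2 < dist (midpoint ℝ A B) (midpoint ℝ C D) := by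
  have key : ‖(A - C) + (B - D)‖ ^ 2 =
      ‖A - C‖ ^ 2 + ‖A - D‖ ^ 2 + ‖B - C‖ ^ 2 + ‖B - D‖ ^ 2 - ‖A - B‖ ^ 2 - ‖C - D‖ ^ 2 := by
    simp only [← real_inner_self_eq_norm_sq, inner_add_add_self, inner_sub_sub_self]
    simp only [inner_sub_left, inner_sub_right]
    rw [real_inner_comm B A, real_inner_comm C A, real_inner_comm D A, real_inner_comm C B,
      real_inner_comm D B, real_inner_comm D C]
    ring
  have hmid : dist (midpoint ℝ A B) (midpoint ℝ C D) = ‖(A - C) + (B - D)‖ / 2 := by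
    rw [dist_eq_norm, midpoint_eq_smul_add, midpoint_eq_smul_add, ← smul_sub]
    rw [show (A + B) - (C + D) = (A - C) + (B - D) by abel]
    rw [norm_smul]
    norm_num [invOf_eq_inv]
    ring
  rw [hmid]
  simp only [dist_eq_norm] at h1 h2 h3 h4 hAB hCD
  have hAD : r < ‖A - D‖ := lt_of_lt_of_le hAB h2
  have hX : ‖A - D‖ ^ 2 ≤ ‖(A - C) + (B - D)‖ ^ 2 := by
    rw [key]
    have e1 : ‖A - B‖ ^ 2 ≤ ‖A - C‖ ^ 2 := pow_le_pow_left₀ (norm_nonneg _) h1 2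
    have e2 : ‖C - D‖ ^ 2 ≤ ‖B - D‖ ^ 2 := pow_le_pow_left₀ (norm_nonneg _) h4 2
    nlinarith [sq_nonneg ‖B - C‖]
  nlinarith [norm_nonneg ((A - C) + (B - D)), norm_nonneg (A - D)]

lemma dist_midpoint_same_left {E : Type*} [NormedAddCommGroup E] [NormedSpace ℝ E]
    (u v w : E) : dist (midpoint ℝ u v) (midpoint ℝ u w) = dist v w / 2 := by
  rw [dist_eq_norm, midpoint_eq_smul_add, midpoint_eq_smul_add, ← smul_sub,
    show (u + v) - (u + w) = v - w by abel, norm_smul, dist_eq_norm]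
  norm_num [invOf_eq_inv]
  ring

/-! ### Exchange lemmas for MSTs -/

lemma tlen_eq_sum (G : SimpleGraph (Fin n)) (E : Finset (Sym2 (Fin n)))
    (h : ∀ e, e ∈ E ↔ e ∈ G.edgeSet) :
    tlen x G = ∑ e ∈ E, Sym2.lift ⟨fun i j => dist (x i) (x j), fun i j => dist_comm _ _⟩ e := by
  rw [tlen]
  apply Finset.sum_congr _ (fun _ _ => rfl)
  ext e
  rw [SimpleGraph.mem_edgeFinset, h]

lemma tlen_deleteEdge {G : SimpleGraph (Fin n)} {a b : Fin n} (h : G.Adj a b) :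
    tlen x (G.deleteEdges {s(a,b)}) = tlen x G - dist (x a) (x b) := by
  rw [tlen_eq_sum (x := x) (G.deleteEdges {s(a,b)}) (G.edgeFinset.erase s(a,b))
    (by intro e; simp [SimpleGraph.edgeSet_deleteEdges, and_comm]),
    Finset.sum_erase_eq_sub (by simpa using h), ← tlen]
  rfl

lemma tlen_addEdge {H : SimpleGraph (Fin n)} {u v : Fin n} (huv : u ≠ v)
    (h : s(u,v) ∉ H.edgeSet) :
    tlen x (H ⊔ SimpleGraph.fromEdgeSet {s(u,v)}) = tlen x H + dist (x u) (x v) := by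
  rw [tlen_eq_sum (x := x) (H ⊔ SimpleGraph.fromEdgeSet {s(u,v)}) (insert s(u,v) H.edgeFinset)
    (by
      intro e
      simp only [SimpleGraph.edgeSet_sup, SimpleGraph.edgeSet_fromEdgeSet, Set.mem_union,
        Set.mem_diff, Set.mem_singleton_iff, Finset.mem_insert, Set.mem_setOf_eq,
        SimpleGraph.mem_edgeFinset, SimpleGraph.mem_edgeSet]
      constructor
      · rintro (rfl | h1)
        · exact Or.inr ⟨rfl, by simp [huv]⟩
        · exact Or.inl h1
      · rintro (h1 | ⟨h1, -⟩)
        · exact Or.inr h1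
        · exact Or.inl h1),
    Finset.sum_insert (by simpa using h), ← tlen, add_comm]
  rfl

lemma reach_aux {G : SimpleGraph (Fin n)} {a b : Fin n} :
    ∀ {w t : Fin n}, G.Walk w t →
      (G.deleteEdges {s(a,b)}).Reachable w t ∨ (G.deleteEdges {s(a,b)}).Reachable w a ∨
        (G.deleteEdges {s(a,b)}).Reachable w b := by
  intro w t p
  induction p with
  | nil => exact Or.inl (SimpleGraph.Reachable.refl _)
  | @cons w y _ h q ih =>
      by_cases he : s(w, y) = s(a, b)
      · rcases Sym2.eq_iff.1 he with ⟨rfl, rfl⟩ | ⟨rfl, rfl⟩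
        · exact Or.inr (Or.inl (SimpleGraph.Reachable.refl _))
        · exact Or.inr (Or.inr (SimpleGraph.Reachable.refl _))
      · have hadj : (G.deleteEdges {s(a,b)}).Adj w y :=
          SimpleGraph.deleteEdges_adj.2 ⟨h, by simpa using he⟩
        rcases ih with h1 | h1 | h1
        · exact Or.inl (hadj.reachable.trans h1)
        · exact Or.inr (Or.inl (hadj.reachable.trans h1))
        · exact Or.inr (Or.inr (hadj.reachable.trans h1))

lemma reach_endpoint {G : SimpleGraph (Fin n)} (hG : G.Connected) (a b w : Fin n) :
    (G.deleteEdges {s(a,b)}).Reachable w a ∨ (G.deleteEdges {s(a,b)}).Reachable w b := by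
  obtain ⟨p⟩ := hG.preconnected w a
  rcases reach_aux (a := a) (b := b) p with h1 | h1 | h1
  · exact Or.inl h1
  · exact Or.inl h1
  · exact Or.inr h1

lemma conn_of_reach {G : SimpleGraph (Fin n)} (hG : G.Connected) {a b u v : Fin n}
    (hu : (G.deleteEdges {s(a,b)}).Reachable u a)
    (hv : (G.deleteEdges {s(a,b)}).Reachable v b) (huv : u ≠ v) :
    ((G.deleteEdges {s(a,b)}) ⊔ SimpleGraph.fromEdgeSet {s(u,v)}).Connected := by
  set H := (G.deleteEdges {s(a,b)}) ⊔ SimpleGraph.fromEdgeSet {s(u,v)} with hH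
  have hle : G.deleteEdges {s(a,b)} ≤ H := le_sup_left
  have hadj : H.Adj u v := Or.inr ((SimpleGraph.fromEdgeSet_adj _).2 ⟨rfl, huv⟩)
  have hba : H.Reachable b a :=
    ((hv.mono hle).symm.trans (hadj.symm.reachable.trans (hu.mono hle)))
  have hall : ∀ w, H.Reachable w a := by
    intro w
    rcases reach_endpoint hG a b w with h1 | h1
    · exact h1.mono hle
    · exact (h1.mono hle).trans hba
  have : Nonempty (Fin n) := ⟨a⟩
  exact ⟨fun w w' => (hall w).trans (hall w').symm⟩

lemma edge_pos (hx : Function.Injective x) {a b : Fin n} (hab : a ≠ b) :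
    0 < dist (x a) (x b) := dist_pos.2 fun h => hab (hx h)

lemma mst_not_reach {G : SimpleGraph (Fin n)} (hG : IsMST x G) (hx : Function.Injective x)
    {a b : Fin n} (hab : G.Adj a b) :
    ¬ (G.deleteEdges {s(a,b)}).Reachable a b := by
  intro hre
  have : Nonempty (Fin n) := ⟨a⟩
  have hconn : (G.deleteEdges {s(a,b)}).Connected := by
    refine ⟨fun w w' => ?_⟩
    have h1 : ∀ w₀, (G.deleteEdges {s(a,b)}).Reachable w₀ a := by
      intro w₀
      rcases reach_endpoint hG.1 a b w₀ with h1 | h1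
      · exact h1
      · exact h1.trans hre.symm
    exact (h1 w).trans (h1 w').symm
  have h2 := hG.2 _ hconn
  rw [tlen_deleteEdge hab] at h2
  have h3 := edge_pos hx hab.ne
  linarith

lemma mst_swap {G : SimpleGraph (Fin n)} (hG : IsMST x G) (hx : Function.Injective x)
    {a b u v : Fin n} (hab : G.Adj a b) (huv : u ≠ v)
    (hu : (G.deleteEdges {s(a,b)}).Reachable u a)
    (hv : (G.deleteEdges {s(a,b)}).Reachable v b) :
    dist (x a) (x b) ≤ dist (x u) (x v) := by
  have hconn := conn_of_reach hG.1 hu hv huv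
  by_cases he : s(u,v) ∈ (G.deleteEdges {s(a,b)}).edgeSet
  · exfalso
    have hle : SimpleGraph.fromEdgeSet {s(u,v)} ≤ G.deleteEdges {s(a,b)} := by
      intro c e hce
      rcases (SimpleGraph.fromEdgeSet_adj _).1 hce with ⟨hmem, hne⟩
      rcases Sym2.eq_iff.1 (Set.mem_singleton_iff.1 hmem) with ⟨rfl, rfl⟩ | ⟨rfl, rfl⟩
      · exact (SimpleGraph.mem_edgeSet _).1 he
      · exact ((SimpleGraph.mem_edgeSet _).1 he).symm
    rw [sup_of_le_left hle] at hconn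
    exact mst_not_reach hG hx hab (hconn.preconnected a b)
  · have h1 := hG.2 _ hconn
    rw [tlen_addEdge huv he, tlen_deleteEdge hab] at h1
    linarith

/-! ### Midpoint separation for MST edges -/

lemma mst_shared_sep {G : SimpleGraph (Fin n)} (hG : IsMST x G) (hx : Function.Injective x)
    {s a e : Fin n} (h1 : G.Adj s a) (h2 : G.Adj s e) (hae : a ≠ e) {r : ℝ}
    (hra : r < dist (x s) (x a)) (hr : 0 ≤ r) :
    r / 2 < dist (midpoint ℝ (x s) (x a)) (midpoint ℝ (x s) (x e)) := by
  have hreach : (G.deleteEdges {s(s,a)}).Reachable e s := by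
    refine SimpleGraph.Adj.reachable (SimpleGraph.deleteEdges_adj.2 ⟨h2.symm, ?_⟩)
    intro hmem
    rcases Sym2.eq_iff.1 (Set.mem_singleton_iff.1 hmem) with ⟨rfl, rfl⟩ | ⟨hq, -⟩
    · exact h1.ne rfl
    · exact hae hq.symm
  have key : dist (x s) (x a) ≤ dist (x e) (x a) :=
    mst_swap hG hx h1 hae.symm hreach (SimpleGraph.Reachable.refl _)
  rw [dist_midpoint_same_left]
  rw [dist_comm (x e) (x a)] at key
  rw [dist_comm (x a) (x e)] at key ⊢
  linarith

lemma mst_disjoint_sep {G : SimpleGraph (Fin n)} (hG : IsMST x G) (hx : Function.Injective x)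
    {a b c e : Fin n} (hab : G.Adj a b) (hcd : G.Adj c e)
    (hac : a ≠ c) (had : a ≠ e) (hbc : b ≠ c) (hbd : b ≠ e)
    (hcb : (G.deleteEdges {s(a,b)}).Reachable c b)
    (hdb : (G.deleteEdges {s(a,b)}).Reachable e b)
    (hac' : (G.deleteEdges {s(c,e)}).Reachable a c)
    (hbc' : (G.deleteEdges {s(c,e)}).Reachable b c)
    {r : ℝ} (h1 : r < dist (x a) (x b)) (h2 : r < dist (x c) (x e)) (hr0 : 0 ≤ r) :
    r / 2 < dist (midpoint ℝ (x a) (x b)) (midpoint ℝ (x c) (x e)) := by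
  have k1 : dist (x a) (x b) ≤ dist (x a) (x c) :=
    mst_swap hG hx hab hac (SimpleGraph.Reachable.refl _) hcb
  have k2 : dist (x a) (x b) ≤ dist (x a) (x e) :=
    mst_swap hG hx hab had (SimpleGraph.Reachable.refl _) hdb
  have k3 : dist (x c) (x e) ≤ dist (x a) (x e) :=
    mst_swap hG hx hcd had hac' (SimpleGraph.Reachable.refl _)
  have k4 : dist (x c) (x e) ≤ dist (x b) (x e) :=
    mst_swap hG hx hcd hbd hbc' (SimpleGraph.Reachable.refl _)
  exact midpoint_sep k1 k2 k3 k4 h1 h2 hr0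

lemma mid_sep {G : SimpleGraph (Fin n)} (hG : IsMST x G) (hx : Function.Injective x)
    {r : ℝ} (hr0 : 0 ≤ r) {a b c e : Fin n} (hab : G.Adj a b) (hcd : G.Adj c e)
    (hne : s(a,b) ≠ s(c,e)) (h1 : r < dist (x a) (x b)) (h2 : r < dist (x c) (x e)) :
    r / 2 < dist (midpoint ℝ (x a) (x b)) (midpoint ℝ (x c) (x e)) := by
  by_cases hac : a = c
  · subst hac
    have hbe : b ≠ e := fun h => hne (by rw [h])
    exact mst_shared_sep hG hx hab hcd hbe h1 hr0
  by_cases hae : a = e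
  · subst hae
    have hbc : b ≠ c := by
      intro h
      subst h
      exact hne (Sym2.eq_swap)
    rw [midpoint_comm (x c) (x a)]
    exact mst_shared_sep hG hx hab hcd.symm hbc h1 hr0
  by_cases hbc : b = c
  · subst hbc
    have hae' : a ≠ e := hae
    rw [midpoint_comm (x a) (x b)]
    rw [dist_comm (x a) (x b)] at h1
    exact mst_shared_sep hG hx hab.symm hcd hae' h1 hr0
  by_cases hbe : b = e
  · subst hbe
    rw [midpoint_comm (x a) (x b), midpoint_comm (x c) (x b)]
    rw [dist_comm (x a) (x b)] at h1
    exact mst_shared_sep hG hx hab.symm hcd.symm hac h1 hr0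
  -- disjoint case
  have hcd1 : (G.deleteEdges {s(a,b)}).Adj c e :=
    SimpleGraph.deleteEdges_adj.2 ⟨hcd, by simpa using (Ne.symm hne)⟩
  have hab2 : (G.deleteEdges {s(c,e)}).Adj a b :=
    SimpleGraph.deleteEdges_adj.2 ⟨hab, by simpa using hne⟩
  have hswap1 : s(b,a) = s(a,b) := Sym2.eq_swap
  have hswap2 : s(e,c) = s(c,e) := Sym2.eq_swap
  rcases reach_endpoint hG.1 a b c with hc | hc
  · -- c (and e) reach a in G - ab ; relabel (a,b) -> (b,a)
    have he' : (G.deleteEdges {s(a,b)}).Reachable e a := hcd1.symm.reachable.trans hc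
    rcases reach_endpoint hG.1 c e a with ha | ha
    · -- a (and b) reach c in G - ce
      have hb' : (G.deleteEdges {s(c,e)}).Reachable b c := hab2.symm.reachable.trans ha
      rw [midpoint_comm (x a) (x b)]
      rw [dist_comm (x a) (x b)] at h1
      exact mst_disjoint_sep hG hx hab.symm hcd hbc hbe hac hae
        (by rw [hswap1]; exact hc) (by rw [hswap1]; exact he') hb' ha h1 h2 hr0
    · -- a (and b) reach e in G - ce ; relabel (c,e) -> (e,c)
      have hb' : (G.deleteEdges {s(c,e)}).Reachable b e := hab2.symm.reachable.trans ha
      rw [midpoint_comm (x a) (x b), midpoint_comm (x c) (x e)]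
      rw [dist_comm (x a) (x b)] at h1
      rw [dist_comm (x c) (x e)] at h2
      exact mst_disjoint_sep hG hx hab.symm hcd.symm hbe hbc hae hac
        (by rw [hswap1]; exact he') (by rw [hswap1]; exact hc)
        (by rw [hswap2]; exact hb') (by rw [hswap2]; exact ha) h1 h2 hr0
  · -- c (and e) reach b in G - ab
    have he' : (G.deleteEdges {s(a,b)}).Reachable e b := hcd1.symm.reachable.trans hc
    rcases reach_endpoint hG.1 c e a with ha | ha
    · have hb' : (G.deleteEdges {s(c,e)}).Reachable b c := hab2.symm.reachable.trans ha
      exact mst_disjoint_sep hG hx hab hcd hac hae hbc hbe hc he' ha hb' h1 h2 hr0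
    · have hb' : (G.deleteEdges {s(c,e)}).Reachable b e := hab2.symm.reachable.trans ha
      rw [midpoint_comm (x c) (x e)]
      rw [dist_comm (x c) (x e)] at h2
      exact mst_disjoint_sep hG hx hab hcd.symm hae hac hbe hbc he' hc
        (by rw [hswap2]; exact ha) (by rw [hswap2]; exact hb') h1 h2 hr0

/-! ### Packing -/

lemma packing {d : ℕ} (p : Pt d) {r : ℝ} (hr : 0 < r) (T : Finset (Pt d))
    (hT : ∀ m ∈ T, dist m p ≤ 3*r)
    (hsep : ∀ m ∈ T, ∀ m' ∈ T, m ≠ m' → r/2 < dist m m') : T.card ≤ 13^d := by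
  have hdisj : (↑T : Set (Pt d)).PairwiseDisjoint (fun m => Metric.closedBall m (r/4)) := by
    intro m hm m' hm' hne
    apply Set.disjoint_left.2
    intro z hz hz'
    have e1 : dist z m ≤ r/4 := Metric.mem_closedBall.1 hz
    have e2 : dist z m' ≤ r/4 := Metric.mem_closedBall.1 hz'
    have e3 : dist m m' ≤ dist m z + dist z m' := dist_triangle _ _ _
    rw [dist_comm m z] at e3
    have := hsep m hm m' hm' hne
    linarith
  have hsub : (⋃ m ∈ T, Metric.closedBall m (r/4)) ⊆ Metric.closedBall p (13*(r/4)) := by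
    intro z hz
    simp only [Set.mem_iUnion] at hz
    obtain ⟨m, hm, hz⟩ := hz
    have e1 : dist z m ≤ r/4 := Metric.mem_closedBall.1 hz
    have e2 := hT m hm
    have : dist z p ≤ dist z m + dist m p := dist_triangle _ _ _
    refine Metric.mem_closedBall.2 (by linarith)
  have hmeas : volume (⋃ m ∈ T, Metric.closedBall m (r/4))
      = ∑ m ∈ T, volume (Metric.closedBall m (r/4)) :=
    measure_biUnion_finset hdisj (fun m _ => measurableSet_closedBall)
  have hle : ∑ m ∈ T, volume (Metric.closedBall m (r/4))
      ≤ volume (Metric.closedBall p (13*(r/4))) := by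
    rw [← hmeas]
    exact measure_mono hsub
  have hvol : ∀ (c : Pt d) (s : ℝ), 0 ≤ s → volume (Metric.closedBall c s)
      = ENNReal.ofReal (s ^ d) * volume (Metric.ball (0:Pt d) 1) := by
    intro c s hs
    rw [MeasureTheory.Measure.addHaar_closedBall _ _ hs, finrank_euclideanSpace,
      Fintype.card_fin]
  rw [Finset.sum_congr rfl (fun m _ => hvol m _ (by positivity)), Finset.sum_const,
    hvol _ _ (by positivity)] at hle
  have hB0 : volume (Metric.ball (0:Pt d) 1) ≠ 0 := (measure_ball_pos _ _ one_pos).ne'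
  have hBt : volume (Metric.ball (0:Pt d) 1) ≠ ⊤ := measure_ball_lt_top.ne
  rw [nsmul_eq_mul, ← mul_assoc] at hle
  have h2 : (T.card : ℝ≥0∞) * ENNReal.ofReal ((r/4)^d) ≤ ENNReal.ofReal ((13*(r/4))^d) :=
    (ENNReal.mul_le_mul_iff_left hB0 hBt).1 hle
  rw [mul_pow, ENNReal.ofReal_mul (by positivity)] at h2
  have ha0 : ENNReal.ofReal ((r/4)^d) ≠ 0 := by
    simp only [ne_eq, ENNReal.ofReal_eq_zero, not_le]
    positivity
  have hat : ENNReal.ofReal ((r/4)^d) ≠ ⊤ := ENNReal.ofReal_ne_top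
  have h3 : (T.card : ℝ≥0∞) ≤ ENNReal.ofReal ((13:ℝ)^d) :=
    (ENNReal.mul_le_mul_iff_left ha0 hat).1 h2
  have h4 : ENNReal.ofReal ((13:ℝ)^d) = ((13^d : ℕ) : ℝ≥0∞) := by
    rw [show ((13:ℝ)^d) = ((13^d : ℕ) : ℝ) by push_cast; ring, ENNReal.ofReal_natCast]
  rw [h4] at h3
  exact_mod_cast h3

end Aux

/-- For any finite point set in `ℝ^d`, any `r > 0` and any minimum spanning tree, the
subgraph of edges of length in `(r, 2r]` has interference less than `2 * 30 ^ d` at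
every point of `ℝ^d`. -/
theorem mst_band_interference (d n : ℕ) (hd : 1 ≤ d) (x : Fin n → Pt d)
    (hx : Function.Injective x) (G : SimpleGraph (Fin n)) (hG : IsMST x G)
    (r : ℝ) (hr : 0 < r) (p : Pt d) :
    interAt x (lengthSub x G r) p < 2 * 30 ^ d := by
  classical
  have hr0 : (0:ℝ) ≤ r := hr.le
  set Gb := lengthSub x G r with hGbdef
  set S : Finset (Fin n) := Finset.univ.filter fun i => dist p (x i) ≤ rad x Gb i with hSdef
  have hSrad : ∀ i ∈ S, dist p (x i) ≤ rad x Gb i := fun i hi => (Finset.mem_filter.1 hi).2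
  have key : ∀ i : Fin n, ∃ j : Fin n,
      (Finset.univ.filter fun j => Gb.Adj i j).Nonempty →
        Gb.Adj i j ∧ rad x Gb i = dist (x i) (x j) := by
    intro i
    by_cases h : (Finset.univ.filter fun j => Gb.Adj i j).Nonempty
    · obtain ⟨j, hj, hsup⟩ := Finset.exists_mem_eq_sup _ h
        (fun j => (⟨dist (x i) (x j), dist_nonneg⟩ : NNReal))
      refine ⟨j, fun _ => ⟨(Finset.mem_filter.1 hj).2, ?_⟩⟩
      rw [rad]
      exact congrArg (fun t : NNReal => (t : ℝ)) hsup
    · exact ⟨i, fun hc => absurd hc h⟩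
  choose jf hjf using key
  set S1 := S.filter (fun i => (Finset.univ.filter fun j => Gb.Adj i j).Nonempty) with hS1def
  set S2 := S.filter (fun i => ¬ (Finset.univ.filter fun j => Gb.Adj i j).Nonempty) with hS2def
  have hS1adj : ∀ i ∈ S1, Gb.Adj i (jf i) :=
    fun i hi => (hjf i (Finset.mem_filter.1 hi).2).1
  have hS1rad : ∀ i ∈ S1, rad x Gb i = dist (x i) (x (jf i)) :=
    fun i hi => (hjf i (Finset.mem_filter.1 hi).2).2
  have hband : ∀ i ∈ S1, G.Adj i (jf i) ∧ r < dist (x i) (x (jf i))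
      ∧ dist (x i) (x (jf i)) ≤ 2*r := by
    intro i hi
    have h : G.Adj i (jf i) ∧ dist (x i) (x (jf i)) ∈ Set.Ioc r (2 * r) := hS1adj i hi
    exact ⟨h.1, h.2.1, h.2.2⟩
  have hp2 : ∀ i ∈ S1, dist p (x i) ≤ 2*r := by
    intro i hi
    have h1 := hSrad i (Finset.mem_filter.1 hi).1
    rw [hS1rad i hi] at h1
    exact h1.trans (hband i hi).2.2
  set φ : Fin n → Pt d := fun i => midpoint ℝ (x i) (x (jf i)) with hφdef
  have hφp : ∀ i ∈ S1, dist (φ i) p ≤ 3*r := by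
    intro i hi
    have h1 : dist (φ i) (x i) = dist (x i) (x (jf i)) / 2 := by
      rw [hφdef]
      simp only
      rw [dist_comm, dist_left_midpoint]
      norm_num
      ring
    have h2 := (hband i hi).2.2
    have h3 := hp2 i hi
    calc dist (φ i) p ≤ dist (φ i) (x i) + dist (x i) p := dist_triangle _ _ _
      _ ≤ r + 2*r := by rw [h1, dist_comm (x i) p]; linarith
      _ = 3*r := by ring
  have hsep : ∀ i ∈ S1, ∀ i' ∈ S1, s(i, jf i) ≠ s(i', jf i') → r/2 < dist (φ i) (φ i') := by
    intro i hi i' hi' hne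
    exact mid_sep hG hx hr0 (hband i hi).1 (hband i' hi').1 hne
      (hband i hi).2.1 (hband i' hi').2.1
  have hsym : ∀ i i' : Fin n, s(i, jf i) = s(i', jf i') → φ i = φ i' := by
    intro i i' h
    rcases Sym2.eq_iff.1 h with ⟨h1, h2⟩ | ⟨h1, h2⟩
    · show midpoint ℝ (x i) (x (jf i)) = midpoint ℝ (x i') (x (jf i'))
      rw [h1]
    · show midpoint ℝ (x i) (x (jf i)) = midpoint ℝ (x i') (x (jf i'))
      rw [h2, h1, midpoint_comm]
  set T := S1.image φ with hTdef
  have hTcard : T.card ≤ 13^d := by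
    apply packing p hr
    · intro m hm
      obtain ⟨i, hi, rfl⟩ := Finset.mem_image.1 hm
      exact hφp i hi
    · intro m hm m' hm' hne
      obtain ⟨i, hi, rfl⟩ := Finset.mem_image.1 hm
      obtain ⟨i', hi', rfl⟩ := Finset.mem_image.1 hm'
      have hed : s(i, jf i) ≠ s(i', jf i') := fun h => hne (hsym i i' h)
      exact hsep i hi i' hi' hed
  have hS1card : S1.card ≤ 2 * T.card := by
    apply Finset.card_le_mul_card_image
    intro m hm
    obtain ⟨i0, hi0, hface⟩ := Finset.mem_image.1 hm
    have hsubs : S1.filter (fun i => φ i = m) ⊆ {i0, jf i0} := by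
      intro i hi
      obtain ⟨hiS1, hφi⟩ := Finset.mem_filter.1 hi
      have heq : s(i, jf i) = s(i0, jf i0) := by
        by_contra hne
        have h5 := hsep i hiS1 i0 hi0 hne
        rw [hφi, hface, dist_self] at h5
        linarith
      rcases Sym2.eq_iff.1 heq with ⟨h1, -⟩ | ⟨h1, -⟩
      · simp [h1]
      · simp [h1]
    calc (S1.filter (fun i => φ i = m)).card ≤ ({i0, jf i0} : Finset (Fin n)).card :=
          Finset.card_le_card hsubs
      _ ≤ 2 := Finset.card_insert_le _ _ |>.trans (by simp)
  have hS2card : S2.card ≤ 1 := by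
    rw [Finset.card_le_one]
    intro i hi i' hi'
    have hzero : ∀ k ∈ S2, x k = p := by
      intro k hk
      obtain ⟨hkS, hkn⟩ := Finset.mem_filter.1 hk
      have hrad0 : rad x Gb k = 0 := by
        rw [rad, Finset.not_nonempty_iff_eq_empty.1 hkn]
        simp
        exact Finset.sup_empty
      have := hSrad k hkS
      rw [hrad0] at this
      have := le_antisymm this dist_nonneg
      exact (dist_eq_zero.1 this.symm.symm).symm ▸ (dist_eq_zero.1 this).symm
    have h1 := hzero i hi
    have h2 := hzero i' hi'
    exact hx (h1.trans h2.symm)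
  have hsplit : S1.card + S2.card = S.card :=
    Finset.card_filter_add_card_filter_not _
  have hSeq : interAt x Gb p = S.card := rfl
  have hnum : 2 * 13^d + 1 < 2 * 30^d := by
    have e1 : 2 * 13^d ≤ 30^d := by
      calc 2 * 13^d ≤ 2^d * 13^d := by
            have : (2:ℕ) ≤ 2^d := by
              calc (2:ℕ) = 2^1 := rfl
              _ ≤ 2^d := Nat.pow_le_pow_right (by norm_num) hd
            exact Nat.mul_le_mul_right _ this
        _ = 26^d := by rw [← Nat.mul_pow]
        _ ≤ 30^d := Nat.pow_le_pow_left (by norm_num) d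
    have e2 : 1 ≤ 30^d := Nat.one_le_pow _ _ (by norm_num)
    have e3 : (1:ℕ) < 30^d := by
      calc (1:ℕ) < 30 := by norm_num
      _ = 30^1 := rfl
      _ ≤ 30^d := Nat.pow_le_pow_right (by norm_num) hd
    omega
  show interAt x Gb p < 2 * 30^d
  rw [hSeq, ← hsplit]
  have : S1.card + S2.card ≤ 2*13^d + 1 := by
    have := hS1card.trans (Nat.mul_le_mul_left 2 hTcard)
    omega
  omega
end
end

section
/- Let d ≥ 1 and let V ⊂ ℝ^d be a finite point set with |V| ≥ 2. Let D = max{‖x − y‖ : x,y ∈ V}/min{‖x − y‖ : x,y ∈ V, x ≠ y}. Then there is a constant C = C(d) (one may take C = 2·30^d) such that every minimum spanning tree MST(V) of V satisfies I(MST(V)) ≤ C·(⌈log₂ D⌉ + 1). -/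
open MeasureTheory Filter
open scoped Classical

noncomputable section

namespace MSTaux
variable {d n : ℕ} (x : Fin n → Pt d)
def W (x : Fin n → Pt d) : Sym2 (Fin n) → ℝ :=
  Sym2.lift ⟨fun i j => dist (x i) (x j), fun i j => dist_comm _ _⟩
lemma W_edge {i j : Fin n} : W x s(i, j) = dist (x i) (x j) := rfl
lemma W_nonneg (e : Sym2 (Fin n)) : 0 ≤ W x e := by
  induction e using Sym2.ind with
  | _ i j => exact (W_edge x (i:=i) (j:=j)) ▸ dist_nonneg
lemma tlen_eq (G : SimpleGraph (Fin n)) : tlen x G = ∑ e ∈ G.edgeFinset, W x e := rfl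

lemma tlen_le_of_subset {G : SimpleGraph (Fin n)} {A : Finset (Sym2 (Fin n))}
    (h : G.edgeSet ⊆ ↑A) : tlen x G ≤ ∑ e ∈ A, W x e := by
  rw [tlen_eq]
  refine Finset.sum_le_sum_of_subset_of_nonneg ?_ fun e _ _ => W_nonneg x e
  intro e he
  exact_mod_cast h (by simpa [SimpleGraph.mem_edgeFinset] using he)

lemma tlen_swap (G : SimpleGraph (Fin n)) (E A : Finset (Sym2 (Fin n)))
    (hE : (E : Set (Sym2 (Fin n))) ⊆ G.edgeSet) :
    tlen x (G.deleteEdges ↑E ⊔ SimpleGraph.fromEdgeSet ↑A) ≤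
      tlen x G - ∑ e ∈ E, W x e + ∑ e ∈ A, W x e := by
  have hEF : E ⊆ G.edgeFinset := by
    intro e he
    simpa [SimpleGraph.mem_edgeFinset] using hE he
  have hsub : (G.deleteEdges ↑E ⊔ SimpleGraph.fromEdgeSet ↑A).edgeSet ⊆
      ↑((G.edgeFinset \ E) ∪ A) := by
    rw [SimpleGraph.edgeSet_sup, SimpleGraph.edgeSet_deleteEdges,
      SimpleGraph.edgeSet_fromEdgeSet]
    intro e he
    rcases he with he | he
    · simp only [Finset.coe_union, Finset.coe_sdiff, Set.mem_union, Set.mem_diff]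
      exact Or.inl ⟨by simpa [SimpleGraph.mem_edgeFinset] using he.1, he.2⟩
    · simp only [Finset.coe_union, Set.mem_union]
      exact Or.inr he.1
  refine (tlen_le_of_subset x hsub).trans ?_
  have h1 : ∑ e ∈ (G.edgeFinset \ E) ∪ A, W x e ≤
      ∑ e ∈ G.edgeFinset \ E, W x e + ∑ e ∈ A, W x e := by
    have := Finset.sum_union_inter (s₁ := G.edgeFinset \ E) (s₂ := A) (f := W x)
    have hnn : 0 ≤ ∑ e ∈ (G.edgeFinset \ E) ∩ A, W x e :=
      Finset.sum_nonneg fun e _ => W_nonneg x e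
    linarith
  have h2 : ∑ e ∈ G.edgeFinset \ E, W x e = tlen x G - ∑ e ∈ E, W x e := by
    rw [Finset.sum_sdiff_eq_sub hEF, tlen_eq]
  linarith

lemma reach_transfer {G H : SimpleGraph (Fin n)}
    (h : ∀ s t, G.Adj s t → H.Reachable s t) :
    ∀ {s t}, G.Reachable s t → H.Reachable s t := by
  intro s t hr
  obtain ⟨w⟩ := hr
  induction w with
  | nil => exact SimpleGraph.Reachable.refl _
  | cons ha _ ih => exact (h _ _ ha).trans ih

lemma connected_transfer {G H : SimpleGraph (Fin n)} (hG : G.Connected)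
    (h : ∀ s t, G.Adj s t → H.Reachable s t) : H.Connected := by
  have : Nonempty (Fin n) := hG.nonempty
  exact SimpleGraph.Connected.mk fun s t => reach_transfer h (hG.preconnected s t)

/-- Two MST edges sharing an endpoint: the far endpoints are far apart. -/
lemma shared_far {G : SimpleGraph (Fin n)} (hMST : IsMST x G) {w u v : Fin n}
    (h1 : G.Adj w u) (h2 : G.Adj w v) (huv : u ≠ v)
    (hlt : dist (x u) (x v) < dist (x w) (x u)) : False := by
  set H := G.deleteEdges ↑({s(w,u)} : Finset (Sym2 (Fin n))) ⊔
    SimpleGraph.fromEdgeSet ↑({s(u,v)} : Finset (Sym2 (Fin n))) with hHdef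
  have hwv : H.Adj w v := by
    refine (SimpleGraph.sup_adj _ _ _ _).mpr (Or.inl ?_)
    rw [SimpleGraph.deleteEdges_adj]
    refine ⟨h2, ?_⟩
    simp only [Finset.coe_singleton, Set.mem_singleton_iff, Sym2.eq_iff]
    rintro (⟨-, h⟩ | ⟨h, -⟩)
    · exact huv h.symm
    · exact h1.ne' h.symm
  have hvu : H.Adj v u := by
    refine (SimpleGraph.sup_adj _ _ _ _).mpr (Or.inr ?_)
    rw [SimpleGraph.fromEdgeSet_adj]
    constructor
    · simp [Sym2.eq_iff]
    · exact huv.symm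
  have hwu : H.Reachable w u := hwv.reachable.trans hvu.reachable
  have hconn : H.Connected := by
    refine connected_transfer hMST.1 fun s t hadj => ?_
    by_cases hc : s(s,t) = s(w,u)
    · rw [Sym2.eq_iff] at hc
      rcases hc with ⟨hs, ht⟩ | ⟨hs, ht⟩
      · rw [hs, ht]; exact hwu
      · rw [hs, ht]; exact hwu.symm
    · refine SimpleGraph.Adj.reachable ?_
      refine (SimpleGraph.sup_adj _ _ _ _).mpr (Or.inl ?_)
      rw [SimpleGraph.deleteEdges_adj]
      exact ⟨hadj, by simpa using hc⟩
  have hswap := tlen_swap x G {s(w,u)} {s(u,v)} (by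
    intro e he
    simp only [Finset.coe_singleton, Set.mem_singleton_iff] at he
    rw [he]
    exact (SimpleGraph.mem_edgeSet G).mpr h1 )
  have hmin := hMST.2 H hconn
  rw [Finset.sum_singleton, Finset.sum_singleton, W_edge, W_edge] at hswap
  rw [← hHdef] at hswap
  linarith

end MSTaux

namespace MSTaux2
open MSTaux

variable {d n : ℕ} (x : Fin n → Pt d)

/-- Two vertex-disjoint MST edges cannot have both cross pairs short. -/
lemma disjoint_far {G : SimpleGraph (Fin n)} (hMST : IsMST x G) {u a v b : Fin n}
    (he : G.Adj u a) (hf : G.Adj v b)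
    (huv : u ≠ v) (hub : u ≠ b) (hav : a ≠ v) (hab : a ≠ b)
    (h1 : dist (x u) (x v) < dist (x u) (x a))
    (h2 : dist (x a) (x b) < dist (x v) (x b)) : False := by
  have hua : u ≠ a := he.ne
  have hvb : v ≠ b := hf.ne
  have hef : s(u,a) ≠ s(v,b) := by
    rw [Ne, Sym2.eq_iff]
    rintro (⟨h', h''⟩ | ⟨h', h''⟩)
    · exact huv h'
    · exact hub h'
  set B := G.deleteEdges ↑({s(u,a), s(v,b)} : Finset (Sym2 (Fin n))) with hB
  have hBadj : ∀ {s t : Fin n}, G.Adj s t → s(s,t) ≠ s(u,a) → s(s,t) ≠ s(v,b) →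
      B.Adj s t := by
    intro s t hst hne1 hne2
    rw [hB, SimpleGraph.deleteEdges_adj]
    refine ⟨hst, ?_⟩
    simp only [Finset.coe_insert, Finset.coe_singleton, Set.mem_insert_iff,
      Set.mem_singleton_iff]
    tauto
  by_cases hcase : B.Reachable u a ∨ B.Reachable u b ∨ B.Reachable v a ∨ B.Reachable v b
  · -- exchange both edges for the two short cross edges
    set H := B ⊔ SimpleGraph.fromEdgeSet ↑({s(u,v), s(a,b)} : Finset (Sym2 (Fin n))) with hH
    have hBH : B ≤ H := le_sup_left
    have huvH : H.Adj u v := by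
      refine (SimpleGraph.sup_adj _ _ _ _).mpr (Or.inr ?_)
      rw [SimpleGraph.fromEdgeSet_adj]
      exact ⟨by simp, huv⟩
    have habH : H.Adj a b := by
      refine (SimpleGraph.sup_adj _ _ _ _).mpr (Or.inr ?_)
      rw [SimpleGraph.fromEdgeSet_adj]
      exact ⟨by simp, hab⟩
    have hkey : H.Reachable u a ∧ H.Reachable v b := by
      rcases hcase with h | h | h | h
      · exact ⟨(h.mono hBH), huvH.symm.reachable.trans ((h.mono hBH).trans habH.reachable)⟩
      · exact ⟨(h.mono hBH).trans habH.symm.reachable, huvH.symm.reachable.trans (h.mono hBH)⟩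
      · exact ⟨huvH.reachable.trans (h.mono hBH), (h.mono hBH).trans habH.reachable⟩
      · exact ⟨huvH.reachable.trans ((h.mono hBH).trans habH.symm.reachable), h.mono hBH⟩
    have hconn : H.Connected := by
      refine connected_transfer hMST.1 fun s t hadj => ?_
      by_cases hc1 : s(s,t) = s(u,a)
      · rw [Sym2.eq_iff] at hc1
        rcases hc1 with ⟨hs, ht⟩ | ⟨hs, ht⟩
        · rw [hs, ht]; exact hkey.1
        · rw [hs, ht]; exact hkey.1.symm
      by_cases hc2 : s(s,t) = s(v,b)
      · rw [Sym2.eq_iff] at hc2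
        rcases hc2 with ⟨hs, ht⟩ | ⟨hs, ht⟩
        · rw [hs, ht]; exact hkey.2
        · rw [hs, ht]; exact hkey.2.symm
      · exact (hBH (hBadj hadj hc1 hc2)).reachable
    have hswap := tlen_swap x G {s(u,a), s(v,b)} {s(u,v), s(a,b)} (by
      intro ee hee
      simp only [Finset.coe_insert, Finset.coe_singleton, Set.mem_insert_iff,
        Set.mem_singleton_iff] at hee
      rcases hee with h' | h' <;> rw [h']
      · exact (SimpleGraph.mem_edgeSet G).mpr he
      · exact (SimpleGraph.mem_edgeSet G).mpr hf )
    have hmin := hMST.2 H hconn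
    have huvab : s(u,v) ≠ s(a,b) := by
      rw [Ne, Sym2.eq_iff]
      rintro (⟨h', h''⟩ | ⟨h', h''⟩)
      · exact hua.symm h'.symm
      · exact hub h'
    rw [Finset.sum_pair hef, Finset.sum_pair huvab] at hswap
    rw [← hB, ← hH] at hswap
    simp only [W_edge] at hswap
    linarith
  · push_neg at hcase
    obtain ⟨nua, nub, nva, nvb⟩ := hcase
    by_cases hRuv : B.Reachable u v
    · -- exchange f for (a,b)
      set H := G.deleteEdges ↑({s(v,b)} : Finset (Sym2 (Fin n))) ⊔
        SimpleGraph.fromEdgeSet ↑({s(a,b)} : Finset (Sym2 (Fin n))) with hH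
      have hBH : B ≤ H := by
        intro s t hst
        rw [hB, SimpleGraph.deleteEdges_adj] at hst
        refine (SimpleGraph.sup_adj _ _ _ _).mpr (Or.inl ?_)
        rw [SimpleGraph.deleteEdges_adj]
        refine ⟨hst.1, fun hm => hst.2 ?_⟩
        simp only [Finset.coe_singleton, Set.mem_singleton_iff] at hm
        simp [hm]
      have heH : H.Adj u a := by
        refine (SimpleGraph.sup_adj _ _ _ _).mpr (Or.inl ?_)
        rw [SimpleGraph.deleteEdges_adj]
        exact ⟨he, by simpa using hef⟩
      have habH : H.Adj a b := by
        refine (SimpleGraph.sup_adj _ _ _ _).mpr (Or.inr ?_)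
        rw [SimpleGraph.fromEdgeSet_adj]
        exact ⟨by simp, hab⟩
      have hkey : H.Reachable v b :=
        ((hRuv.symm).mono hBH).trans (heH.reachable.trans habH.reachable)
      have hconn : H.Connected := by
        refine connected_transfer hMST.1 fun s t hadj => ?_
        by_cases hc : s(s,t) = s(v,b)
        · rw [Sym2.eq_iff] at hc
          rcases hc with ⟨hs, ht⟩ | ⟨hs, ht⟩
          · rw [hs, ht]; exact hkey
          · rw [hs, ht]; exact hkey.symm
        · refine SimpleGraph.Adj.reachable ?_
          refine (SimpleGraph.sup_adj _ _ _ _).mpr (Or.inl ?_)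
          rw [SimpleGraph.deleteEdges_adj]
          exact ⟨hadj, by simpa using hc⟩
      have hswap := tlen_swap x G {s(v,b)} {s(a,b)} (by
        intro ee hee
        simp only [Finset.coe_singleton, Set.mem_singleton_iff] at hee
        rw [hee]
        exact (SimpleGraph.mem_edgeSet G).mpr hf )
      have hmin := hMST.2 H hconn
      rw [Finset.sum_singleton, Finset.sum_singleton] at hswap
      rw [← hH] at hswap
      simp only [W_edge] at hswap
      linarith
    by_cases hRab : B.Reachable a b
    · -- exchange e for (u,v)
      set H := G.deleteEdges ↑({s(u,a)} : Finset (Sym2 (Fin n))) ⊔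
        SimpleGraph.fromEdgeSet ↑({s(u,v)} : Finset (Sym2 (Fin n))) with hH
      have hBH : B ≤ H := by
        intro s t hst
        rw [hB, SimpleGraph.deleteEdges_adj] at hst
        refine (SimpleGraph.sup_adj _ _ _ _).mpr (Or.inl ?_)
        rw [SimpleGraph.deleteEdges_adj]
        refine ⟨hst.1, fun hm => hst.2 ?_⟩
        simp only [Finset.coe_singleton, Set.mem_singleton_iff] at hm
        simp [hm]
      have hfH : H.Adj v b := by
        refine (SimpleGraph.sup_adj _ _ _ _).mpr (Or.inl ?_)
        rw [SimpleGraph.deleteEdges_adj]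
        exact ⟨hf, by simpa using hef.symm⟩
      have huvH : H.Adj u v := by
        refine (SimpleGraph.sup_adj _ _ _ _).mpr (Or.inr ?_)
        rw [SimpleGraph.fromEdgeSet_adj]
        exact ⟨by simp, huv⟩
      have hkey : H.Reachable u a :=
        huvH.reachable.trans (hfH.reachable.trans ((hRab.symm).mono hBH))
      have hconn : H.Connected := by
        refine connected_transfer hMST.1 fun s t hadj => ?_
        by_cases hc : s(s,t) = s(u,a)
        · rw [Sym2.eq_iff] at hc
          rcases hc with ⟨hs, ht⟩ | ⟨hs, ht⟩
          · rw [hs, ht]; exact hkey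
          · rw [hs, ht]; exact hkey.symm
        · refine SimpleGraph.Adj.reachable ?_
          refine (SimpleGraph.sup_adj _ _ _ _).mpr (Or.inl ?_)
          rw [SimpleGraph.deleteEdges_adj]
          exact ⟨hadj, by simpa using hc⟩
      have hswap := tlen_swap x G {s(u,a)} {s(u,v)} (by
        intro ee hee
        simp only [Finset.coe_singleton, Set.mem_singleton_iff] at hee
        rw [hee]
        exact (SimpleGraph.mem_edgeSet G).mpr he )
      have hmin := hMST.2 H hconn
      rw [Finset.sum_singleton, Finset.sum_singleton] at hswap
      rw [← hH] at hswap
      simp only [W_edge] at hswap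
      linarith
    · -- no reconnection possible: G would be disconnected
      have hstep : ∀ {s c : Fin n}, G.Adj s c →
          (B.Reachable s u ∨ B.Reachable s a) → (B.Reachable c u ∨ B.Reachable c a) := by
        intro s c hadj hs
        by_cases hc1 : s(s,c) = s(u,a)
        · rw [Sym2.eq_iff] at hc1
          rcases hc1 with ⟨-, ht⟩ | ⟨-, ht⟩
          · exact Or.inr (ht ▸ SimpleGraph.Reachable.refl _)
          · exact Or.inl (ht ▸ SimpleGraph.Reachable.refl _)
        by_cases hc2 : s(s,c) = s(v,b)
        · rw [Sym2.eq_iff] at hc2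
          rcases hc2 with ⟨hs', -⟩ | ⟨hs', -⟩
          · subst hs'
            rcases hs with h | h
            · exact absurd h.symm hRuv
            · exact absurd h nva
          · subst hs'
            rcases hs with h | h
            · exact absurd h.symm nub
            · exact absurd h.symm hRab
        · exact hs.imp ((hBadj hadj hc1 hc2).symm.reachable.trans)
            ((hBadj hadj hc1 hc2).symm.reachable.trans)
      have hwalk : ∀ {s t : Fin n} (_ : G.Walk s t),
          (B.Reachable s u ∨ B.Reachable s a) → (B.Reachable t u ∨ B.Reachable t a) := by
        intro s t w
        induction w with
        | nil => exact id
        | cons hadj _ ih => exact fun h => ih (hstep hadj h)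
      obtain ⟨w⟩ := hMST.1.preconnected u v
      rcases hwalk w (Or.inl (SimpleGraph.Reachable.refl _)) with h | h
      · exact hRuv h.symm
      · exact nva h

end MSTaux2

namespace Geom
open MSTaux MSTaux2

variable {d n : ℕ}

lemma floor_eq_abs_lt {α β : ℝ} (h : ⌊α⌋ = ⌊β⌋) : |α - β| < 1 := by
  have h1 := Int.floor_le α
  have h2 := Int.lt_floor_add_one α
  have h3 := Int.floor_le β
  have h4 := Int.lt_floor_add_one β
  rw [h] at h1 h2
  rw [abs_sub_lt_iff]
  constructor <;> linarith

lemma coord_le_dist (q q' : Pt d) (j : Fin d) : |q j - q' j| ≤ dist q q' := by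
  rw [EuclideanSpace.dist_eq]
  have h1 : |q j - q' j| = dist (q j) (q' j) := (Real.dist_eq _ _).symm
  rw [h1]
  have h2 : dist (q j) (q' j) ^ 2 ≤ ∑ i : Fin d, dist (q i) (q' i) ^ 2 := by
    refine Finset.single_le_sum (f := fun i => dist (q i) (q' i) ^ 2) ?_ (Finset.mem_univ j)
    intro i _
    positivity
  calc dist (q j) (q' j) = Real.sqrt (dist (q j) (q' j) ^ 2) := by
        rw [Real.sqrt_sq dist_nonneg]
    _ ≤ Real.sqrt (∑ i : Fin d, dist (q i) (q' i) ^ 2) := Real.sqrt_le_sqrt h2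

lemma cell_close (hd : 1 ≤ d) {ℓ : ℝ} (hℓ : 0 < ℓ) (p q q' : Pt d)
    (h : ∀ j : Fin d, ⌊(q j - p j) * (2 * d) / ℓ⌋ = ⌊(q' j - p j) * (2 * d) / ℓ⌋) :
    dist q q' < ℓ := by
  have hD : (1:ℝ) ≤ (d:ℝ) := by exact_mod_cast hd
  have hdpos : (0:ℝ) < 2 * d := by linarith
  have hcoord : ∀ j : Fin d, |q j - q' j| < ℓ / (2 * d) := by
    intro j
    have habs := floor_eq_abs_lt (h j)
    have heq : (q j - p j) * (2 * d) / ℓ - (q' j - p j) * (2 * d) / ℓ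
        = (q j - q' j) * (2 * d) / ℓ := by ring
    rw [heq] at habs
    have habs2 : |q j - q' j| * (2 * d) / ℓ < 1 := by
      have : |(q j - q' j) * (2 * d) / ℓ| = |q j - q' j| * (2 * d) / ℓ := by
        rw [abs_div, abs_mul, abs_of_pos hdpos, abs_of_pos hℓ]
      linarith [this ▸ habs]
    rw [div_lt_one hℓ] at habs2
    rw [lt_div_iff₀ hdpos]
    linarith
  have hsum : ∑ j : Fin d, dist (q j) (q' j) ^ 2 < ℓ ^ 2 := by
    have hne : (Finset.univ : Finset (Fin d)).Nonempty := ⟨⟨0, by omega⟩, Finset.mem_univ _⟩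
    have hlt : ∑ j : Fin d, dist (q j) (q' j) ^ 2 <
        ∑ _j : Fin d, (ℓ / (2 * d)) ^ 2 := by
      refine Finset.sum_lt_sum_of_nonempty hne fun j _ => ?_
      rw [Real.dist_eq]
      exact pow_lt_pow_left₀ (hcoord j) (abs_nonneg _) (by norm_num)
    have hconst : ∑ _j : Fin d, (ℓ / (2 * d)) ^ 2 = (d:ℝ) * (ℓ / (2 * d)) ^ 2 := by
      rw [Finset.sum_const, Finset.card_univ, Fintype.card_fin, nsmul_eq_mul]
    have heq2 : (d:ℝ) * (ℓ / (2 * d)) ^ 2 = ℓ ^ 2 / (4 * d) := by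
      field_simp
      ring
    have hfin : ℓ ^ 2 / (4 * (d:ℝ)) < ℓ ^ 2 := by
      refine div_lt_self (by positivity) (by linarith)
    linarith
  rw [EuclideanSpace.dist_eq]
  rw [Real.sqrt_lt' hℓ]
  exact hsum


end Geom

namespace Geom2
open MSTaux MSTaux2 Geom

variable {d n : ℕ} (x : Fin n → Pt d)

lemma rad_le {G : SimpleGraph (Fin n)} {u j : Fin n} (h : G.Adj u j) :
    dist (x u) (x j) ≤ rad x G u := by
  have hj : j ∈ Finset.univ.filter fun j => G.Adj u j := by simp [h]
  have := Finset.le_sup (f := fun j => (⟨dist (x u) (x j), dist_nonneg⟩ : NNReal)) hj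
  exact_mod_cast this

lemma rad_spec {G : SimpleGraph (Fin n)} {u a : Fin n} (h : G.Adj u a) :
    ∃ b, G.Adj u b ∧ rad x G u = dist (x u) (x b) := by
  have hne : (Finset.univ.filter fun j => G.Adj u j).Nonempty := ⟨a, by simp [h]⟩
  obtain ⟨b, hb, hsup⟩ := Finset.exists_mem_eq_sup _ hne
    (fun j => (⟨dist (x u) (x j), dist_nonneg⟩ : NNReal))
  refine ⟨b, (Finset.mem_filter.mp hb).2, ?_⟩
  simp only [rad, hsup]
  exact congrArg NNReal.toReal hsup

lemma rad_pos_neighbor {G : SimpleGraph (Fin n)} {u : Fin n} (h : 0 < rad x G u) :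
    ∃ a, G.Adj u a := by
  by_contra hno
  push_neg at hno
  have hemp : (Finset.univ.filter fun j => G.Adj u j) = ∅ :=
    Finset.filter_eq_empty_iff.mpr fun j _ => hno j
  rw [rad, hemp] at h
  exact lt_irrefl (0:ℝ) h

lemma bucket_card (hd : 1 ≤ d) {G : SimpleGraph (Fin n)} (hMST : IsMST x G)
    (p : Pt d) {ℓ : ℝ} (hℓ : 0 < ℓ) :
    (Finset.univ.filter fun u =>
       dist p (x u) ≤ rad x G u ∧ ℓ ≤ rad x G u ∧ rad x G u < 2 * ℓ).card
      ≤ ((16 * d + 1) ^ d) ^ 2 := by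
  classical
  set S := Finset.univ.filter fun u =>
       dist p (x u) ≤ rad x G u ∧ ℓ ≤ rad x G u ∧ rad x G u < 2 * ℓ with hSdef
  have hS : ∀ u ∈ S, dist p (x u) ≤ rad x G u ∧ ℓ ≤ rad x G u ∧ rad x G u < 2 * ℓ :=
    fun u hu => (Finset.mem_filter.mp hu).2
  have hnbr : ∀ u, u ∈ S → ∃ b, G.Adj u b ∧ rad x G u = dist (x u) (x b) := by
    intro u hu
    obtain ⟨a, ha⟩ := rad_pos_neighbor x (lt_of_lt_of_le hℓ (hS u hu).2.1)
    exact rad_spec x ha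
  choose! f hf1 hf2 using hnbr
  set cell : Pt d → (Fin d → ℤ) := fun q j => ⌊(q j - p j) * (2 * d) / ℓ⌋ with hcell
  set φ : Fin n → (Fin d → ℤ) × (Fin d → ℤ) := fun u => (cell (x u), cell (x (f u))) with hφ
  have hinj : Set.InjOn φ ↑S := by
    intro u hu' v hv' hφeq
    simp only [Finset.mem_coe] at hu' hv'
    by_contra huv
    have hradu : ℓ ≤ dist (x u) (x (f u)) := by
      rw [← hf2 u hu']; exact (hS u hu').2.1
    have hradv : ℓ ≤ dist (x v) (x (f v)) := by
      rw [← hf2 v hv']; exact (hS v hv').2.1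
    have hc1 : cell (x u) = cell (x v) := congrArg Prod.fst hφeq
    have hc2 : cell (x (f u)) = cell (x (f v)) := congrArg Prod.snd hφeq
    have d1 : dist (x u) (x v) < ℓ :=
      cell_close hd hℓ p _ _ fun j => congrFun hc1 j
    have d2 : dist (x (f u)) (x (f v)) < ℓ :=
      cell_close hd hℓ p _ _ fun j => congrFun hc2 j
    have hvfu : v ≠ f u := by
      rintro rfl
      exact absurd d1 (not_lt.mpr hradu)
    have hufv : u ≠ f v := by
      intro h
      apply absurd d1 (not_lt.mpr ?_)
      calc ℓ ≤ dist (x v) (x (f v)) := hradv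
        _ = dist (x u) (x v) := by rw [← h, dist_comm]
    by_cases hff : f u = f v
    · refine shared_far x hMST (w := f u) (hf1 u hu').symm ?_ huv ?_
      · rw [hff]; exact (hf1 v hv').symm
      · calc dist (x u) (x v) < ℓ := d1
          _ ≤ dist (x u) (x (f u)) := hradu
          _ = dist (x (f u)) (x u) := dist_comm _ _
    · exact disjoint_far x hMST (hf1 u hu') (hf1 v hv') huv hufv hvfu.symm hff
        (lt_of_lt_of_le d1 hradu) (lt_of_lt_of_le d2 hradv)
  set lo : Fin d → ℤ := fun _ => -(8 * d) with hlo
  set hi : Fin d → ℤ := fun _ => 8 * d with hhi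
  have hbox : ∀ q : Pt d, dist p q ≤ 4 * ℓ → cell q ∈ Finset.Icc lo hi := by
    intro q hq
    rw [Finset.mem_Icc]
    have hcb : ∀ j : Fin d, |q j - p j| ≤ 4 * ℓ := by
      intro j
      calc |q j - p j| = |p j - q j| := by rw [abs_sub_comm]
        _ ≤ dist p q := coord_le_dist p q j
        _ ≤ 4 * ℓ := hq
    constructor <;> rw [Pi.le_def] <;> intro j
    · rw [hlo]
      rw [Int.le_floor]
      have := abs_le.mp (hcb j)
      have hdd : (0:ℝ) < 2 * d := by
        have : (1:ℝ) ≤ (d:ℝ) := by exact_mod_cast hd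
        linarith
      have : -(8 * (d:ℝ)) ≤ (q j - p j) * (2 * d) / ℓ := by
        rw [le_div_iff₀ hℓ]
        nlinarith [this.1, this.2, hℓ.le]
      beta_reduce
      exact_mod_cast this
    · rw [hhi]
      have := abs_le.mp (hcb j)
      have hdd : (0:ℝ) < 2 * d := by
        have : (1:ℝ) ≤ (d:ℝ) := by exact_mod_cast hd
        linarith
      have hle : (q j - p j) * (2 * d) / ℓ ≤ 8 * (d:ℝ) := by
        rw [div_le_iff₀ hℓ]
        nlinarith [this.1, this.2, hℓ.le]
      calc (cell q) j ≤ ⌊(8 * (d:ℝ))⌋ := Int.floor_le_floor hle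
        _ = 8 * d := by
          rw [show (8 * (d:ℝ)) = ((8 * (d:ℤ) : ℤ) : ℝ) by push_cast; ring, Int.floor_intCast]
  have hmaps : ∀ u ∈ S, φ u ∈ Finset.Icc lo hi ×ˢ Finset.Icc lo hi := by
    intro u hu
    obtain ⟨hu1, hu2, hu3⟩ := hS u hu
    have hb1 : dist p (x u) ≤ 4 * ℓ := by linarith [hu1.trans_lt hu3]
    have hb2 : dist p (x (f u)) ≤ 4 * ℓ := by
      have ht := dist_triangle p (x u) (x (f u))
      have hr : dist (x u) (x (f u)) < 2 * ℓ := by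
        rw [← hf2 u hu]; exact hu3
      linarith [hu1.trans_lt hu3]
    exact Finset.mem_product.mpr ⟨hbox _ hb1, hbox _ hb2⟩
  have hcard := Finset.card_le_card_of_injOn φ hmaps hinj
  rw [Finset.card_product] at hcard
  have hIcc : (Finset.Icc lo hi).card = (16 * d + 1) ^ d := by
    rw [Pi.card_Icc]
    have : ∀ j : Fin d, (Finset.Icc (lo j) (hi j)).card = 16 * d + 1 := by
      intro j
      simp only [hlo, hhi]
      rw [Int.card_Icc]
      omega
    rw [Finset.prod_congr rfl fun j _ => this j, Finset.prod_const, Finset.card_univ,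
      Fintype.card_fin]
  rw [hIcc] at hcard
  calc S.card ≤ (16 * d + 1) ^ d * (16 * d + 1) ^ d := hcard
    _ = ((16 * d + 1) ^ d) ^ 2 := (sq _).symm

end Geom2

/-- For a finite set of at least two points in `ℝ^d` with distance ratio `D`
(the largest interpoint distance divided by the smallest interpoint distance),
every minimum spanning tree has interference `O(log D)`; one may take the
constant `C = 2 * 30 ^ d`. -/
theorem mst_interference_log_ratio (d : ℕ) (hd : 1 ≤ d) :
    ∃ C : ℝ, 0 < C ∧
      ∀ (n : ℕ), 2 ≤ n → ∀ x : Fin n → Pt d, Function.Injective x →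
        ∀ Dmax Dmin : ℝ,
          IsGreatest {s : ℝ | ∃ i j : Fin n, s = dist (x i) (x j)} Dmax →
          IsLeast {s : ℝ | ∃ i j : Fin n, i ≠ j ∧ s = dist (x i) (x j)} Dmin →
          ∀ G : SimpleGraph (Fin n), IsMST x G →
            (interG x G : ℝ) ≤ C * ((⌈Real.logb 2 (Dmax / Dmin)⌉ : ℝ) + 1) := by
  classical
  refine ⟨((((16 * d + 1) ^ d) ^ 2 : ℕ) : ℝ), by positivity, ?_⟩
  intro n hn x hinj Dmax Dmin hmax hmin G hMST
  obtain ⟨hmaxmem, hmaxub⟩ := hmax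
  obtain ⟨⟨i0, j0, hij0, hD0⟩, hminlb⟩ := hmin
  have hDminpos : 0 < Dmin := by
    rw [hD0]
    exact dist_pos.mpr fun h => hij0 (hinj h)
  have hDminmax : Dmin ≤ Dmax := hmaxub ⟨i0, j0, hD0⟩
  have hratio : 1 ≤ Dmax / Dmin := (one_le_div hDminpos).mpr hDminmax
  have hlog0 : 0 ≤ Real.logb 2 (Dmax / Dmin) := Real.logb_nonneg one_lt_two hratio
  have hceil0 : (0:ℤ) ≤ ⌈Real.logb 2 (Dmax / Dmin)⌉ := Int.ceil_nonneg hlog0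
  set c : ℕ := (⌈Real.logb 2 (Dmax / Dmin)⌉).toNat with hc
  set K : ℕ := c + 1 with hK
  have hcast : ((c:ℤ)) = ⌈Real.logb 2 (Dmax / Dmin)⌉ := Int.toNat_of_nonneg hceil0
  have hnt : Nontrivial (Fin n) := Fin.nontrivial_iff_two_le.mpr hn
  have hnbr : ∀ u : Fin n, ∃ a, G.Adj u a := by
    intro u
    obtain ⟨v, hvu⟩ := exists_ne u
    obtain ⟨w⟩ := hMST.1.preconnected u v
    cases w with
    | nil => exact absurd rfl hvu
    | cons h p => exact ⟨_, h⟩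
  have hradmin : ∀ u, Dmin ≤ rad x G u := by
    intro u
    obtain ⟨a, ha⟩ := hnbr u
    obtain ⟨b, hb, hrb⟩ := Geom2.rad_spec x ha
    rw [hrb]
    exact hminlb ⟨u, b, hb.ne, rfl⟩
  have hradmax : ∀ u, rad x G u ≤ Dmax := by
    intro u
    obtain ⟨a, ha⟩ := hnbr u
    obtain ⟨b, hb, hrb⟩ := Geom2.rad_spec x ha
    rw [hrb]
    exact hmaxub ⟨u, b, rfl⟩
  have hper : ∀ i : Fin n, interAt x G (x i) ≤ K * (((16 * d + 1) ^ d) ^ 2) := by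
    intro i
    have hsub : (Finset.univ.filter fun u => dist (x i) (x u) ≤ rad x G u) ⊆
        (Finset.range K).biUnion fun k => Finset.univ.filter fun u =>
          dist (x i) (x u) ≤ rad x G u ∧ 2 ^ k * Dmin ≤ rad x G u ∧
            rad x G u < 2 * (2 ^ k * Dmin) := by
      intro u hu
      rw [Finset.mem_filter] at hu
      set t := rad x G u / Dmin with ht
      have ht1 : 1 ≤ t := (one_le_div hDminpos).mpr (hradmin u)
      have htpos : 0 < t := lt_of_lt_of_le one_pos ht1
      set k : ℕ := (⌊Real.logb 2 t⌋).toNat with hk2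
      have hkcast : ((k:ℤ)) = ⌊Real.logb 2 t⌋ :=
        Int.toNat_of_nonneg (Int.floor_nonneg.mpr (Real.logb_nonneg one_lt_two ht1))
      have hkr : ((k:ℝ)) = ⌊Real.logb 2 t⌋ := by exact_mod_cast hkcast
      have hlow : (2:ℝ) ^ k ≤ t := by
        have h1 : ((k:ℝ)) ≤ Real.logb 2 t := hkr ▸ Int.floor_le _
        calc (2:ℝ) ^ k = (2:ℝ) ^ ((k:ℕ):ℝ) := (Real.rpow_natCast 2 k).symm
          _ ≤ (2:ℝ) ^ Real.logb 2 t := Real.rpow_le_rpow_of_exponent_le one_le_two h1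
          _ = t := Real.rpow_logb two_pos (by norm_num) htpos
      have hhigh : t < (2:ℝ) ^ (k + 1) := by
        have h1 : Real.logb 2 t < (k:ℝ) + 1 := by
          rw [hkr]; exact Int.lt_floor_add_one _
        calc t = (2:ℝ) ^ Real.logb 2 t :=
              (Real.rpow_logb two_pos (by norm_num) htpos).symm
          _ < (2:ℝ) ^ (((k:ℕ):ℝ) + 1) := Real.rpow_lt_rpow_of_exponent_lt one_lt_two h1
          _ = (2:ℝ) ^ (k + 1) := by
              rw [← Real.rpow_natCast 2 (k + 1)]
              congr 1
              push_cast
              ring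
      have hkK : k < K := by
        have htD : t ≤ Dmax / Dmin := by
          rw [ht]
          exact (div_le_div_iff_of_pos_right hDminpos).mpr (hradmax u)
        have h1 : Real.logb 2 t ≤ Real.logb 2 (Dmax / Dmin) :=
          Real.logb_le_logb_of_le one_lt_two htpos htD
        have h2 : ⌊Real.logb 2 t⌋ ≤ ⌈Real.logb 2 (Dmax / Dmin)⌉ :=
          (Int.floor_le_floor h1).trans (Int.floor_le_ceil _)
        have h3 : (k:ℤ) ≤ (c:ℤ) := by rw [hkcast, hcast]; exact h2
        have h4 : k ≤ c := by exact_mod_cast h3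
        omega
      refine Finset.mem_biUnion.mpr ⟨k, Finset.mem_range.mpr hkK, ?_⟩
      rw [Finset.mem_filter]
      refine ⟨Finset.mem_univ _, hu.2, ?_, ?_⟩
      · exact (le_div_iff₀ hDminpos).mp hlow
      · calc rad x G u < 2 ^ (k + 1) * Dmin := (div_lt_iff₀ hDminpos).mp hhigh
          _ = 2 * (2 ^ k * Dmin) := by ring
    have h0 : interAt x G (x i) =
        (Finset.univ.filter fun u => dist (x i) (x u) ≤ rad x G u).card := rfl
    calc interAt x G (x i)
        ≤ ((Finset.range K).biUnion fun k => Finset.univ.filter fun u =>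
            dist (x i) (x u) ≤ rad x G u ∧ 2 ^ k * Dmin ≤ rad x G u ∧
              rad x G u < 2 * (2 ^ k * Dmin)).card := by
          rw [h0]; exact Finset.card_le_card hsub
      _ ≤ ∑ k ∈ Finset.range K, (Finset.univ.filter fun u =>
            dist (x i) (x u) ≤ rad x G u ∧ 2 ^ k * Dmin ≤ rad x G u ∧
              rad x G u < 2 * (2 ^ k * Dmin)).card := Finset.card_biUnion_le
      _ ≤ ∑ _k ∈ Finset.range K, ((16 * d + 1) ^ d) ^ 2 :=
          Finset.sum_le_sum fun k _ =>
            Geom2.bucket_card x hd hMST (x i) (by positivity)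
      _ = K * (((16 * d + 1) ^ d) ^ 2) := by
          rw [Finset.sum_const, Finset.card_range, smul_eq_mul]
  have hsup : interG x G ≤ K * (((16 * d + 1) ^ d) ^ 2) :=
    Finset.sup_le fun i _ => hper i
  have hKle : (K:ℝ) ≤ (⌈Real.logb 2 (Dmax / Dmin)⌉ : ℝ) + 1 := by
    have : ((c:ℕ):ℝ) = ((⌈Real.logb 2 (Dmax / Dmin)⌉ : ℤ) : ℝ) := by exact_mod_cast hcast
    rw [hK]
    push_cast
    linarith [this]
  have hCpos : (0:ℝ) ≤ ((((16 * d + 1) ^ d) ^ 2 : ℕ) : ℝ) := by positivity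
  calc (interG x G : ℝ) ≤ ((K * (((16 * d + 1) ^ d) ^ 2) : ℕ) : ℝ) := by exact_mod_cast hsup
    _ = ((((16 * d + 1) ^ d) ^ 2 : ℕ) : ℝ) * (K:ℝ) := by push_cast; ring
    _ ≤ ((((16 * d + 1) ^ d) ^ 2 : ℕ) : ℝ) * ((⌈Real.logb 2 (Dmax / Dmin)⌉ : ℝ) + 1) :=
        mul_le_mul_of_nonneg_left hKle hCpos
end
end

section
/- Let d ≥ 1, let V ⊂ ℝ^d be a finite point set, let r > 0, and let T be a minimum spanning tree of V. Then T does not contain two distinct edges {a,b} and {c,d}, each of Euclidean length greater than r, such that ‖a − c‖ ≤ r and ‖b − d‖ ≤ r. -/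
open MeasureTheory Filter
open scoped Classical

noncomputable section

lemma reach_del' {n : ℕ} (G : SimpleGraph (Fin n)) (a b : Fin n) {u v : Fin n}
    (p : G.Walk u v) :
    (G.deleteEdges {s(a,b)}).Reachable u v ∨
      (G.deleteEdges {s(a,b)}).Reachable u a ∨ (G.deleteEdges {s(a,b)}).Reachable u b := by
  induction p with
  | nil => exact Or.inl (SimpleGraph.Reachable.refl _)
  | @cons u' v' _ h p ih =>
    by_cases hd : s(u', v') = s(a, b)
    · rw [Sym2.eq_iff] at hd
      rcases hd with ⟨h1, h2⟩ | ⟨h1, h2⟩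
      · exact Or.inr (Or.inl (by subst h1; exact SimpleGraph.Reachable.refl _))
      · exact Or.inr (Or.inr (by subst h1; exact SimpleGraph.Reachable.refl _))
    · have hadj : (G.deleteEdges {s(a,b)}).Adj u' v' := by
        rw [SimpleGraph.deleteEdges_adj]
        exact ⟨h, by simpa using hd⟩
      rcases ih with h1 | h1 | h1
      · exact Or.inl (hadj.reachable.trans h1)
      · exact Or.inr (Or.inl (hadj.reachable.trans h1))
      · exact Or.inr (Or.inr (hadj.reachable.trans h1))

lemma reach_del {n : ℕ} (G : SimpleGraph (Fin n)) (hG : G.Connected) (a b : Fin n)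
    (w : Fin n) :
    (G.deleteEdges {s(a,b)}).Reachable w a ∨ (G.deleteEdges {s(a,b)}).Reachable w b := by
  obtain ⟨p⟩ := hG w a
  rcases reach_del' G a b p with h | h | h
  · exact Or.inl h
  · exact Or.inl h
  · exact Or.inr h

lemma swap_lt {d n : ℕ} (x : Fin n → Pt d)
    (G : SimpleGraph (Fin n)) (hconn : G.Connected)
    {a b u v : Fin n} (hab : G.Adj a b)
    (hnr : ¬ (G.deleteEdges {s(a,b)}).Reachable a b)
    (hu : (G.deleteEdges {s(a,b)}).Reachable a u)
    (hv : (G.deleteEdges {s(a,b)}).Reachable b v)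
    (hlt : dist (x u) (x v) < dist (x a) (x b)) :
    ∃ H : SimpleGraph (Fin n), H.Connected ∧ tlen x H < tlen x G := by
  classical
  set D := G.deleteEdges {s(a,b)} with hDdef
  have huv : u ≠ v := by
    rintro rfl; exact hnr (hu.trans hv.symm)
  set H := SimpleGraph.fromEdgeSet (D.edgeSet ∪ {s(u,v)}) with hHdef
  have hDH : D ≤ H := by
    intro p q hpq
    rw [hHdef, SimpleGraph.fromEdgeSet_adj]
    exact ⟨Or.inl ((D.mem_edgeSet).mpr hpq), hpq.ne⟩
  have hHuv : H.Adj u v := by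
    rw [hHdef, SimpleGraph.fromEdgeSet_adj]
    exact ⟨Or.inr rfl, huv⟩
  have hconn' : H.Connected := by
    rw [SimpleGraph.connected_iff]
    have key : ∀ w, H.Reachable w u := by
      intro w
      rcases reach_del G hconn a b w with h | h
      · exact (h.mono hDH).trans (hu.mono hDH)
      · exact (h.mono hDH).trans ((hv.mono hDH).trans hHuv.symm.reachable)
    exact ⟨fun p q => (key p).trans (key q).symm, ⟨a⟩⟩
  refine ⟨H, hconn', ?_⟩
  have hsuv_not : s(u,v) ∉ G.edgeSet := by
    intro hmem
    by_cases h' : s(u,v) = s(a,b)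
    · rw [Sym2.eq_iff] at h'
      rcases h' with ⟨h1, h2⟩ | ⟨h1, h2⟩
      · subst h1; subst h2; exact absurd hlt (lt_irrefl _)
      · subst h1; subst h2; exact hnr hu
    · have hDuv : D.Adj u v := by
        rw [hDdef, SimpleGraph.deleteEdges_adj]
        exact ⟨hmem, by simpa using h'⟩
      exact hnr ((hu.trans hDuv.reachable).trans hv.symm)
  have hHset : H.edgeSet = D.edgeSet ∪ {s(u,v)} := by
    rw [hHdef, SimpleGraph.edgeSet_fromEdgeSet]
    ext f
    simp only [Set.mem_diff, Set.mem_union, Set.mem_singleton_iff, Set.mem_setOf_eq]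
    constructor
    · rintro ⟨h1, _⟩; exact h1
    · rintro (h1 | rfl)
      · exact ⟨Or.inl h1, SimpleGraph.not_isDiag_of_mem_edgeSet _ h1⟩
      · exact ⟨Or.inr rfl, by simpa [Sym2.mk_isDiag_iff] using huv⟩
  have hfin : @SimpleGraph.edgeFinset _ H H.fintypeEdgeSet = insert s(u,v) (G.edgeFinset.erase s(a,b)) := by
    apply Finset.coe_injective
    rw [SimpleGraph.coe_edgeFinset, Finset.coe_insert, Finset.coe_erase,
      SimpleGraph.coe_edgeFinset, hHset, hDdef, SimpleGraph.edgeSet_deleteEdges,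
      Set.insert_eq, Set.union_comm]
  have hnotmem : s(u,v) ∉ G.edgeFinset.erase s(a,b) := fun h =>
    hsuv_not (SimpleGraph.mem_edgeFinset.mp (Finset.mem_of_mem_erase h))
  have habmem : s(a,b) ∈ G.edgeFinset := SimpleGraph.mem_edgeFinset.mpr hab
  set wgt : Sym2 (Fin n) → ℝ :=
    fun e => Sym2.lift ⟨fun i j => dist (x i) (x j), fun i j => dist_comm _ _⟩ e with hwgt
  have hsum : ∑ f ∈ G.edgeFinset.erase s(a,b), wgt f + wgt s(a,b) = ∑ f ∈ G.edgeFinset, wgt f :=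
    Finset.sum_erase_add _ _ habmem
  have hH : tlen x H = wgt s(u,v) + ∑ f ∈ G.edgeFinset.erase s(a,b), wgt f := by
    rw [tlen, ← Finset.sum_insert hnotmem]
    exact Finset.sum_congr (by convert hfin) (fun _ _ => rfl)
  have hGlen : tlen x G = ∑ f ∈ G.edgeFinset, wgt f := rfl
  have hwuv : wgt s(u,v) = dist (x u) (x v) := rfl
  have hwab : wgt s(a,b) = dist (x a) (x b) := rfl
  rw [hH, hGlen]
  linarith [hsum, hwuv, hwab, hlt]

/-- A minimum spanning tree of a finite point set in `ℝ^d` cannot contain two distinct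
edges `{a, b}` and `{c, e}`, each of length greater than `r`, with `dist a c ≤ r` and
`dist b e ≤ r`. -/
theorem mst_no_two_close_long_edges (d n : ℕ) (hd : 1 ≤ d) (x : Fin n → Pt d)
    (hx : Function.Injective x) (G : SimpleGraph (Fin n)) (hG : IsMST x G)
    (r : ℝ) (hr : 0 < r) (a b c e : Fin n)
    (hab : G.Adj a b) (hce : G.Adj c e) (hne : s(a, b) ≠ s(c, e))
    (hlab : r < dist (x a) (x b)) (hlce : r < dist (x c) (x e))
    (hac : dist (x a) (x c) ≤ r) (hbe : dist (x b) (x e) ≤ r) :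
    False := by
  classical
  obtain ⟨hconn, hmin⟩ := hG
  set D := G.deleteEdges {s(a,b)} with hDdef
  by_cases hR : D.Reachable a b
  · -- removing the edge keeps connectivity; contradiction with minimality
    have hconnD : D.Connected := by
      rw [SimpleGraph.connected_iff]
      have key : ∀ w, D.Reachable w a := by
        intro w
        rcases reach_del G hconn a b w with h | h
        · exact h
        · exact h.trans hR.symm
      exact ⟨fun p q => (key p).trans (key q).symm, ⟨a⟩⟩
    set wgt : Sym2 (Fin n) → ℝ :=
      fun f => Sym2.lift ⟨fun i j => dist (x i) (x j), fun i j => dist_comm _ _⟩ f with hwgt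
    have habmem : s(a,b) ∈ G.edgeFinset := SimpleGraph.mem_edgeFinset.mpr hab
    have hfin : @SimpleGraph.edgeFinset _ D D.fintypeEdgeSet = G.edgeFinset.erase s(a,b) := by
      apply Finset.coe_injective
      rw [SimpleGraph.coe_edgeFinset, Finset.coe_erase, SimpleGraph.coe_edgeFinset,
        hDdef, SimpleGraph.edgeSet_deleteEdges]
    have hD : tlen x D = ∑ f ∈ G.edgeFinset.erase s(a,b), wgt f := by
      rw [tlen]
      exact Finset.sum_congr (by convert hfin) (fun _ _ => rfl)
    have hsum : ∑ f ∈ G.edgeFinset.erase s(a,b), wgt f + wgt s(a,b)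
        = ∑ f ∈ G.edgeFinset, wgt f := Finset.sum_erase_add _ _ habmem
    have hwab : wgt s(a,b) = dist (x a) (x b) := rfl
    have hpos : (0:ℝ) < dist (x a) (x b) := hr.trans hlab
    have hlt : tlen x D < tlen x G := by
      have hGlen : tlen x G = ∑ f ∈ G.edgeFinset, wgt f := rfl
      rw [hD, hGlen]
      linarith
    exact absurd (hmin D hconnD) (not_le.mpr hlt)
  · have hceD : D.Adj c e := by
      rw [hDdef, SimpleGraph.deleteEdges_adj]
      exact ⟨hce, by simpa using (Ne.symm hne)⟩
    rcases reach_del G hconn a b c with h | h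
    · -- c (hence e) is on a's side: swap edge {a,b} for {e,b}
      have hu : D.Reachable a e := (hceD.symm.reachable.trans h).symm
      have hlt : dist (x e) (x b) < dist (x a) (x b) := by
        rw [dist_comm]; exact lt_of_le_of_lt hbe hlab
      obtain ⟨H, hc, hl⟩ := swap_lt x G hconn hab hR hu (SimpleGraph.Reachable.refl b) hlt
      exact absurd (hmin H hc) (not_le.mpr hl)
    · -- c is on b's side: swap edge {a,b} for {a,c}
      have hlt : dist (x a) (x c) < dist (x a) (x b) := lt_of_le_of_lt hac hlab
      obtain ⟨H, hc, hl⟩ := swap_lt x G hconn hab hR (SimpleGraph.Reachable.refl a) h.symm hlt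
      exact absurd (hmin H hc) (not_le.mpr hl)
end
end

section
/- Let V ⊂ ℝ² be a finite point set that contains a Zeno configuration of size k (for some scale u > 0 and center x). Then every minimum spanning tree MST(V) of V satisfies I(MST(V)) ≥ k − 1; in fact, the point x_0 of V lying in the ball D_0 satisfies I(x_0, MST(V)) ≥ k − 1. -/
open MeasureTheory Filter
open scoped Classical

noncomputable section

/-- The center of the `i`-th small ball of a Zeno configuration with scale `u`
centered at `x`: the point `x + (u * 3 ^ i, 0)` for `i ≥ 1`, and `x` itself for `i = 0`. -/
noncomputable def zenoCenter (x : Pt 2) (u : ℝ) (i : ℕ) : Pt 2 :=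
  if i = 0 then x else x + EuclideanSpace.single (0 : Fin 2) (u * 3 ^ i)

/-- The point family `p` contains a Zeno configuration of size `k` with scale `u > 0`
centered at `x`: there are `k` points, one in each closed ball `D i` of radius `u`
centered at `zenoCenter x u i`, and the big closed ball `D` of radius `u * 3 ^ k`
centered at `x` contains no other points of the family. -/
def ContainsZeno {n : ℕ} (p : Fin n → Pt 2) (k : ℕ) (u : ℝ) (x : Pt 2) : Prop :=
  0 < u ∧ ∃ f : Fin k → Fin n, Function.Injective f ∧
    (∀ i : Fin k, dist (p (f i)) (zenoCenter x u (i : ℕ)) ≤ u) ∧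
    (∀ j : Fin n, dist (p j) x ≤ u * 3 ^ k → ∃ i : Fin k, j = f i)


section Graph
variable {V : Type*} {G : SimpleGraph V}

lemma reach_or (v w : V) {z t : V} (W : G.Walk z t) :
    (G.deleteEdges {s(v,w)}).Reachable z t ∨ (G.deleteEdges {s(v,w)}).Reachable z v ∨
      (G.deleteEdges {s(v,w)}).Reachable z w := by
  induction W with
  | nil => exact Or.inl (SimpleGraph.Reachable.refl _)
  | @cons a b c h W ih =>
    by_cases he : s(a, b) = s(v, w)
    · rcases Sym2.eq_iff.mp he with ⟨rfl, rfl⟩ | ⟨rfl, rfl⟩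
      · exact Or.inr (Or.inl (SimpleGraph.Reachable.refl _))
      · exact Or.inr (Or.inr (SimpleGraph.Reachable.refl _))
    · have hadj : (G.deleteEdges {s(v,w)}).Adj a b := by
        rw [SimpleGraph.deleteEdges_adj]; exact ⟨h, by simpa using he⟩
      rcases ih with h1 | h1 | h1
      · exact Or.inl (hadj.reachable.trans h1)
      · exact Or.inr (Or.inl (hadj.reachable.trans h1))
      · exact Or.inr (Or.inr (hadj.reachable.trans h1))

lemma cross_edge (L : Set V) {s t : V} (W : G.Walk s t) :
    W.IsTrail → s ∈ L → t ∉ L →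
    ∃ v w : V, G.Adj v w ∧ v ∈ L ∧ w ∉ L ∧
      (G.deleteEdges {s(v,w)}).Reachable s v ∧
      (G.deleteEdges {s(v,w)}).Reachable w t ∧ s(v,w) ∈ W.edges := by
  induction W with
  | nil => intro _ hs ht; exact absurd hs ht
  | @cons a b c h W ih =>
    intro hW hs ht
    rw [SimpleGraph.Walk.isTrail_cons] at hW
    obtain ⟨hW', hnotin⟩ := hW
    by_cases hb : b ∈ L
    · obtain ⟨v, w, hvw, hvL, hwL, h1, h2, hmem⟩ := ih hW' hb ht
      have hne : s(a,b) ≠ s(v,w) := fun hh => hnotin (hh ▸ hmem)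
      have hadj : (G.deleteEdges {s(v,w)}).Adj a b := by
        rw [SimpleGraph.deleteEdges_adj]; exact ⟨h, by simpa using hne⟩
      exact ⟨v, w, hvw, hvL, hwL, hadj.reachable.trans h1, h2,
        List.mem_cons_of_mem _ hmem⟩
    · refine ⟨a, b, h, hs, hb, SimpleGraph.Reachable.refl _, ?_, List.mem_cons_self⟩
      exact ⟨W.toDeleteEdges _ (by intro e he; simp only [Set.mem_singleton_iff]; rintro rfl; exact hnotin he)⟩
end Graph
section Aux
variable {d n : ℕ}

lemma elen_nonneg (p : Fin n → Pt d) (e : Sym2 (Fin n)) :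
    0 ≤ Sym2.lift ⟨fun i j => dist (p i) (p j), fun i j => dist_comm _ _⟩ e := by
  induction e using Sym2.ind with
  | _ a b => simpa using dist_nonneg

lemma rad_nonneg (p : Fin n → Pt d) (G : SimpleGraph (Fin n)) (i : Fin n) : 0 ≤ rad p G i :=
  NNReal.coe_nonneg _

lemma le_rad {p : Fin n → Pt d} {G : SimpleGraph (Fin n)} {i j : Fin n} (h : G.Adj i j) :
    dist (p i) (p j) ≤ rad p G i := by
  have hj : j ∈ Finset.univ.filter fun j => G.Adj i j := by simp [h]
  have h2 := Finset.le_sup (f := fun j => (⟨dist (p i) (p j), dist_nonneg⟩ : NNReal)) hj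
  simp only [rad]
  exact_mod_cast h2

lemma exch {p : Fin n → Pt d} {G : SimpleGraph (Fin n)} (hG : IsMST p G)
    {v w v' w' : Fin n} (hadj : G.Adj v w) (hne : v' ≠ w')
    (h1 : (G.deleteEdges {s(v,w)}).Reachable v' v)
    (h2 : (G.deleteEdges {s(v,w)}).Reachable w' w)
    (hlt : dist (p v') (p w') < dist (p v) (p w)) : False := by
  set L : Sym2 (Fin n) → ℝ :=
    fun e => Sym2.lift ⟨fun i j => dist (p i) (p j), fun i j => dist_comm _ _⟩ e with hL
  have htlen : ∀ K : SimpleGraph (Fin n), tlen p K = ∑ e ∈ K.edgeFinset, L e :=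
    fun K => rfl
  set H : SimpleGraph (Fin n) :=
    SimpleGraph.fromEdgeSet {s(v',w')} ⊔ G.deleteEdges {s(v,w)} with hH
  have hle : G.deleteEdges {s(v,w)} ≤ H := le_sup_right
  have hvw : H.Reachable v w := by
    have ha : H.Adj v' w' := by
      apply (SimpleGraph.sup_adj _ _ _ _).mpr
      exact Or.inl ((SimpleGraph.fromEdgeSet_adj _).mpr ⟨rfl, hne⟩)
    exact ((h1.mono hle).symm.trans ha.reachable).trans (h2.mono hle)
  have hreach : ∀ z, H.Reachable z v := by
    intro z
    obtain ⟨W⟩ := hG.1.preconnected z v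
    rcases reach_or v w W with h | h | h
    · exact h.mono hle
    · exact h.mono hle
    · exact (h.mono hle).trans hvw.symm
  have hHconn : H.Connected := by
    rw [SimpleGraph.connected_iff]
    exact ⟨fun a b => (hreach a).trans (hreach b).symm, ⟨v⟩⟩
  have hmem : s(v,w) ∈ G.edgeFinset := SimpleGraph.mem_edgeFinset.mpr hadj
  have hEdge : H.edgeSet ⊆ {s(v',w')} ∪ (G.edgeSet \ {s(v,w)}) := by
    rw [hH, SimpleGraph.edgeSet_sup, SimpleGraph.edgeSet_fromEdgeSet,
      SimpleGraph.edgeSet_deleteEdges]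
    intro a ha
    rcases ha with ⟨ha1, _⟩ | ha1
    · exact Or.inl ha1
    · exact Or.inr ha1
  have h3 : tlen p H ≤ ∑ a ∈ insert s(v',w') (G.edgeFinset.erase s(v,w)), L a := by
    rw [htlen]
    refine Finset.sum_le_sum_of_subset_of_nonneg ?_ (fun a _ _ => elen_nonneg p a)
    intro a ha
    simp only [SimpleGraph.edgeFinset, Set.mem_toFinset] at ha
    rcases hEdge ha with ha1 | ⟨ha1, ha2⟩
    · exact Finset.mem_insert.mpr (Or.inl ha1)
    · exact Finset.mem_insert.mpr (Or.inr (Finset.mem_erase.mpr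
        ⟨by simpa using ha2, SimpleGraph.mem_edgeFinset.mpr ha1⟩))
  have h4 : ∑ a ∈ insert s(v',w') (G.edgeFinset.erase s(v,w)), L a ≤
      dist (p v') (p w') + ∑ a ∈ G.edgeFinset.erase s(v,w), L a := by
    by_cases he' : s(v',w') ∈ G.edgeFinset.erase s(v,w)
    · rw [Finset.insert_eq_self.mpr he']
      have hd : (0:ℝ) ≤ dist (p v') (p w') := dist_nonneg
      linarith
    · rw [Finset.sum_insert he']
      exact add_le_add_right (le_of_eq rfl) _
  have h5 : tlen p G = dist (p v) (p w) + ∑ a ∈ G.edgeFinset.erase s(v,w), L a := by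
    rw [htlen, ← Finset.add_sum_erase _ L hmem]
    rfl
  have h6 := hG.2 H hHconn
  rw [h5] at h6
  linarith

end Aux

noncomputable def tau (u : ℝ) (i : ℕ) : ℝ := if i = 0 then 0 else u * 3 ^ i

lemma tau_zero (u : ℝ) : tau u 0 = 0 := rfl

lemma tau_of_ne (u : ℝ) {i : ℕ} (h : i ≠ 0) : tau u i = u * 3 ^ i := if_neg h

lemma tau_nonneg {u : ℝ} (hu : 0 ≤ u) (i : ℕ) : 0 ≤ tau u i := by
  unfold tau; split
  · exact le_refl 0
  · positivity

lemma tau_le {u : ℝ} (hu : 0 ≤ u) (i : ℕ) : tau u i ≤ u * 3 ^ i := by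
  unfold tau; split
  · positivity
  · exact le_refl _

lemma tau_mono {u : ℝ} (hu : 0 ≤ u) {i j : ℕ} (h : i ≤ j) : tau u i ≤ tau u j := by
  rcases eq_or_ne i 0 with rfl | hi
  · rw [tau_zero]; exact tau_nonneg hu j
  · rw [tau_of_ne u hi, tau_of_ne u (show j ≠ 0 by omega)]
    exact mul_le_mul_of_nonneg_left (pow_le_pow_right₀ (by norm_num) h) hu

lemma zenoCenter_eq (x : Pt 2) (u : ℝ) (i : ℕ) :
    zenoCenter x u i = x + EuclideanSpace.single (0 : Fin 2) (tau u i) := by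
  unfold zenoCenter tau
  split
  · ext j
    simp [EuclideanSpace.single_apply]
  · rfl

lemma dist_zenoCenter (x : Pt 2) (u : ℝ) (i j : ℕ) :
    dist (zenoCenter x u i) (zenoCenter x u j) = |tau u i - tau u j| := by
  rw [zenoCenter_eq, zenoCenter_eq, dist_add_left, EuclideanSpace.dist_single_same,
    Real.dist_eq]

lemma dist_zenoCenter_zero (x : Pt 2) (u : ℝ) (hu : 0 ≤ u) (i : ℕ) :
    dist (zenoCenter x u i) x = tau u i := by
  have h := dist_zenoCenter x u i 0
  rw [tau_zero, sub_zero, abs_of_nonneg (tau_nonneg hu i)] at h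
  simpa [zenoCenter] using h

section Zeno
variable {n k : ℕ} {p : Fin n → Pt 2} {u : ℝ} {x : Pt 2} {f : Fin k → Fin n}

lemma dist_lb (hu : 0 < u)
    (hin : ∀ i : Fin k, dist (p (f i)) (zenoCenter x u (i : ℕ)) ≤ u)
    {i j : ℕ} (hi : i < k) (hj : j < k) :
    tau u j - tau u i - 2*u ≤ dist (p (f ⟨i, hi⟩)) (p (f ⟨j, hj⟩)) := by
  have h1 : dist (p (f ⟨i, hi⟩)) (zenoCenter x u i) ≤ u := hin ⟨i, hi⟩
  have h2 : dist (p (f ⟨j, hj⟩)) (zenoCenter x u j) ≤ u := hin ⟨j, hj⟩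
  have ht := dist_triangle4 (zenoCenter x u i) (p (f ⟨i,hi⟩)) (p (f ⟨j,hj⟩)) (zenoCenter x u j)
  rw [dist_zenoCenter] at ht
  have habs : tau u j - tau u i ≤ |tau u i - tau u j| := by
    rw [abs_sub_comm]; exact le_abs_self _
  have hc1 : dist (zenoCenter x u i) (p (f ⟨i,hi⟩)) = dist (p (f ⟨i,hi⟩)) (zenoCenter x u i) :=
    dist_comm _ _
  linarith

lemma dist_ub (hu : 0 < u)
    (hin : ∀ i : Fin k, dist (p (f i)) (zenoCenter x u (i : ℕ)) ≤ u)
    {i j : ℕ} (hi : i < k) (hj : j < k) (hij : tau u i ≤ tau u j) :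
    dist (p (f ⟨i, hi⟩)) (p (f ⟨j, hj⟩)) ≤ tau u j - tau u i + 2*u := by
  have h1 : dist (p (f ⟨i, hi⟩)) (zenoCenter x u i) ≤ u := hin ⟨i, hi⟩
  have h2 : dist (p (f ⟨j, hj⟩)) (zenoCenter x u j) ≤ u := hin ⟨j, hj⟩
  have ht := dist_triangle4 (p (f ⟨i,hi⟩)) (zenoCenter x u i) (zenoCenter x u j) (p (f ⟨j,hj⟩))
  rw [dist_zenoCenter] at ht
  have habs : |tau u i - tau u j| = tau u j - tau u i := by
    rw [abs_sub_comm]; exact abs_of_nonneg (sub_nonneg.mpr hij)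
  have hc2 : dist (zenoCenter x u j) (p (f ⟨j,hj⟩)) = dist (p (f ⟨j,hj⟩)) (zenoCenter x u j) :=
    dist_comm _ _
  linarith

lemma dist_to_x (hu : 0 < u)
    (hin : ∀ i : Fin k, dist (p (f i)) (zenoCenter x u (i : ℕ)) ≤ u)
    {i : ℕ} (hi : i < k) :
    dist (p (f ⟨i, hi⟩)) x ≤ tau u i + u := by
  have h1 : dist (p (f ⟨i, hi⟩)) (zenoCenter x u i) ≤ u := hin ⟨i, hi⟩
  have ht := dist_triangle (p (f ⟨i, hi⟩)) (zenoCenter x u i) x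
  rw [dist_zenoCenter_zero x u hu.le] at ht
  linarith

lemma good (hu : 0 < u) (hf : Function.Injective f)
    (hin : ∀ i : Fin k, dist (p (f i)) (zenoCenter x u (i : ℕ)) ≤ u)
    (hout : ∀ j : Fin n, dist (p j) x ≤ u * 3 ^ k → ∃ i : Fin k, j = f i)
    {G : SimpleGraph (Fin n)} (hG : IsMST p G)
    (i : ℕ) (h1i : 1 ≤ i) (hik2 : i + 2 ≤ k) (h0k : 0 < k) (hik' : i < k) :
    dist (p (f ⟨0, h0k⟩)) (p (f ⟨i, hik'⟩)) ≤ rad p G (f ⟨i, hik'⟩) := by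
  by_contra bad
  push_neg at bad
  have hu' : (0:ℝ) ≤ u := hu.le
  have hi1k : i + 1 < k := by omega
  have hA : dist (p (f ⟨0, h0k⟩)) (p (f ⟨i, hik'⟩)) ≤ u * 3 ^ i + 2 * u := by
    have h := dist_ub hu hin h0k hik' (by rw [tau_zero]; exact tau_nonneg hu' i)
    rw [tau_zero, sub_zero, tau_of_ne u (show i ≠ 0 by omega)] at h
    exact h
  by_cases hc : i = 1
  · subst hc
    have hne01 : f ⟨0, h0k⟩ ≠ f ⟨1, hik'⟩ := by
      intro h
      have h3 : (0:ℕ) = 1 := congrArg Fin.val (hf h)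
      omega
    have hnadj : ¬ G.Adj (f ⟨1, hik'⟩) (f ⟨0, h0k⟩) := by
      intro h
      have hle := le_rad (p := p) h
      rw [dist_comm] at hle
      linarith
    obtain ⟨W⟩ := hG.1.preconnected (f ⟨0, h0k⟩) (f ⟨1, hik'⟩)
    obtain ⟨v, w, hvw, hvL, hwL, hr1, hr2, -⟩ :=
      cross_edge ({f ⟨0, h0k⟩} : Set (Fin n)) W.bypass W.bypass_isPath.isTrail
        rfl (by simpa using hne01.symm)
    rw [Set.mem_singleton_iff] at hvL
    subst hvL
    by_cases hw1 : w = f ⟨1, hik'⟩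
    · subst hw1; exact hnadj hvw.symm
    · refine exch hG hvw hne01 (SimpleGraph.Reachable.refl _) hr2.symm ?_
      have h31 : u * 3 ^ (1:ℕ) = 3 * u := by ring
      rw [h31] at hA
      by_cases hwb : dist (p w) x ≤ u * 3 ^ k
      · obtain ⟨m, rfl⟩ := hout w hwb
        have hm0 : (m:ℕ) ≠ 0 := by
          intro h
          exact hwL (Set.mem_singleton_iff.mpr (by congr 1; exact Fin.ext h))
        have hm1 : (m:ℕ) ≠ 1 := by
          intro h
          exact hw1 (by congr 1; exact Fin.ext h)
        have h9 : (9:ℝ) ≤ 3 ^ (m:ℕ) := by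
          calc (9:ℝ) = 3^(2:ℕ) := by norm_num
          _ ≤ 3^(m:ℕ) := pow_le_pow_right₀ (by norm_num) (by omega)
        have hlb : u * 3 ^ (m:ℕ) - 0 - 2*u ≤ dist (p (f ⟨0,h0k⟩)) (p (f m)) := by
          have h := dist_lb hu hin h0k m.isLt
          rw [tau_zero, tau_of_ne u (show (m:ℕ) ≠ 0 by omega)] at h
          rwa [Fin.eta] at h
        have h9u : u * 9 ≤ u * 3 ^ (m:ℕ) := mul_le_mul_of_nonneg_left h9 hu'
        linarith
      · push_neg at hwb
        have h27 : (27:ℝ) ≤ 3^k := by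
          calc (27:ℝ) = 3^(3:ℕ) := by norm_num
          _ ≤ 3^k := pow_le_pow_right₀ (by norm_num) (by omega)
        have hdx : dist (p (f ⟨0,h0k⟩)) x ≤ tau u 0 + u := dist_to_x hu hin h0k
        rw [tau_zero] at hdx
        have htr := dist_triangle (p w) (p (f ⟨0,h0k⟩)) x
        rw [dist_comm (p w) (p (f ⟨0,h0k⟩))] at htr
        have h27u : u * 27 ≤ u * 3 ^ k := mul_le_mul_of_nonneg_left h27 hu'
        linarith
  · -- i ≥ 2
    have hi2 : 2 ≤ i := by omega
    obtain ⟨i', rfl⟩ : ∃ i', i = i' + 1 := ⟨i - 1, by omega⟩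
    have hi'1 : 1 ≤ i' := by omega
    -- atoms: X := u * 3^i'
    have hX3 : 3 * u ≤ u * 3 ^ i' := by
      have : (3:ℝ) ≤ 3 ^ i' := by
        calc (3:ℝ) = 3^(1:ℕ) := by norm_num
        _ ≤ 3^i' := pow_le_pow_right₀ (by norm_num) hi'1
      nlinarith
    have hEi : u * 3 ^ (i'+1) = 3 * (u * 3 ^ i') := by rw [pow_succ]; ring
    have hEi1 : u * 3 ^ (i'+1+1) = 9 * (u * 3 ^ i') := by rw [pow_succ, pow_succ]; ring
    have hEk : 27 * (u * 3 ^ i') ≤ u * 3 ^ k := by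
      calc 27 * (u * 3 ^ i') = u * 3 ^ (i' + 3) := by rw [pow_add]; ring
      _ ≤ u * 3 ^ k := by
          refine mul_le_mul_of_nonneg_left ?_ hu'
          exact pow_le_pow_right₀ (by norm_num) (by omega)
    obtain ⟨W⟩ := hG.1.preconnected (f ⟨i'+1, hik'⟩) (f ⟨i'+1+1, hi1k⟩)
    obtain ⟨v, w, hvw, hvL, hwL, hr1, hr2, -⟩ :=
      cross_edge ({v | ∃ j : Fin k, (j:ℕ) ≤ i'+1 ∧ v = f j} : Set (Fin n))
        W.bypass W.bypass_isPath.isTrail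
        ⟨⟨i'+1, hik'⟩, le_refl _, rfl⟩
        (by
          rintro ⟨j, hj, hEq⟩
          have h2 : i'+1+1 = (j:ℕ) := congrArg Fin.val (hf hEq)
          omega)
    obtain ⟨j, hji, rfl⟩ := hvL
    have wchar : (∃ m : Fin k, i'+1+1 ≤ (m:ℕ) ∧ w = f m) ∨ u*3^k < dist (p w) x := by
      by_cases hwb : dist (p w) x ≤ u * 3^k
      · obtain ⟨m, rfl⟩ := hout w hwb
        refine Or.inl ⟨m, ?_, rfl⟩
        by_contra hmm
        push_neg at hmm
        exact hwL ⟨m, by omega, rfl⟩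
      · exact Or.inr (not_le.mp hwb)
    by_cases hjeq : (j:ℕ) = i'+1
    · -- the crossing edge starts at f i itself: contradiction with small radius
      have hjj : f j = f ⟨i'+1, hik'⟩ := by congr 1; exact Fin.ext hjeq
      rw [hjj] at hvw
      have hrad := le_rad (p := p) hvw
      have h9u : u * 9 ≤ u * 3 ^ (i'+1) := by
        rw [hEi]; nlinarith
      rcases wchar with ⟨m, hm, rfl⟩ | hfar
      · have h3m : (3:ℝ)^(i'+1+1) ≤ 3^(m:ℕ) := pow_le_pow_right₀ (by norm_num) hm
        have hMA : u * 3^(i'+1+1) ≤ u * 3^(m:ℕ) := mul_le_mul_of_nonneg_left h3m hu'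
        have hlb : u * 3^(m:ℕ) - u * 3^(i'+1) - 2*u ≤
            dist (p (f ⟨i'+1, hik'⟩)) (p (f m)) := by
          have h := dist_lb hu hin hik' m.isLt
          rw [tau_of_ne u (show i'+1 ≠ 0 by omega), tau_of_ne u (show (m:ℕ) ≠ 0 by omega)] at h
          rwa [Fin.eta] at h
        linarith
      · have hdxj : dist (p (f ⟨i'+1, hik'⟩)) x ≤ tau u (i'+1) + u := dist_to_x hu hin hik'
        rw [tau_of_ne u (show i'+1 ≠ 0 by omega)] at hdxj
        have htr := dist_triangle (p w) (p (f ⟨i'+1, hik'⟩)) x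
        rw [dist_comm (p w) (p (f ⟨i'+1, hik'⟩))] at htr
        linarith
    · -- the crossing edge starts strictly left of f i : exchange it for (f i, f (i+1))
      have hji' : (j:ℕ) ≤ i' := by omega
      have htauj : tau u (j:ℕ) ≤ u * 3 ^ i' :=
        le_trans (tau_le hu' _)
          (mul_le_mul_of_nonneg_left (pow_le_pow_right₀ (by norm_num) hji') hu')
      have htaujnn : 0 ≤ tau u (j:ℕ) := tau_nonneg hu' _
      have hne : f ⟨i'+1, hik'⟩ ≠ f ⟨i'+1+1, hi1k⟩ := by
        intro h
        have h3 : i'+1 = i'+1+1 := congrArg Fin.val (hf h)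
        omega
      refine exch hG hvw hne hr1 hr2.symm ?_
      have hub : dist (p (f ⟨i'+1, hik'⟩)) (p (f ⟨i'+1+1, hi1k⟩)) ≤
          u*3^(i'+1+1) - u*3^(i'+1) + 2*u := by
        have h := dist_ub hu hin hik' hi1k (tau_mono hu' (by omega))
        rw [tau_of_ne u (show i'+1 ≠ 0 by omega), tau_of_ne u (show i'+1+1 ≠ 0 by omega)] at h
        exact h
      rcases wchar with ⟨m, hm, rfl⟩ | hfar
      · have h3m : (3:ℝ)^(i'+1+1) ≤ 3^(m:ℕ) := pow_le_pow_right₀ (by norm_num) hm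
        have hMA : u * 3^(i'+1+1) ≤ u * 3^(m:ℕ) := mul_le_mul_of_nonneg_left h3m hu'
        have hlb : tau u (m:ℕ) - tau u (j:ℕ) - 2*u ≤ dist (p (f j)) (p (f m)) := by
          have h := dist_lb hu hin j.isLt m.isLt
          rwa [Fin.eta, Fin.eta] at h
        rw [tau_of_ne u (show (m:ℕ) ≠ 0 by omega)] at hlb
        linarith
      · have hdxj : dist (p (f j)) x ≤ tau u (j:ℕ) + u := by
          have h := dist_to_x hu hin j.isLt
          rwa [Fin.eta] at h
        have htr := dist_triangle (p w) (p (f j)) x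
        rw [dist_comm (p w) (p (f j))] at htr
        linarith
end Zeno

/-- If a point set in `ℝ²` contains a Zeno configuration of size `k`, then every
minimum spanning tree has interference at least `k - 1`; in fact the point `x₀`
lying in the ball `D₀` already receives interference at least `k - 1`. -/
theorem zeno_mst_interference (n k : ℕ) (hk : 0 < k) (p : Fin n → Pt 2)
    (hp : Function.Injective p) (u : ℝ) (hu : 0 < u) (x : Pt 2)
    (f : Fin k → Fin n) (hf : Function.Injective f)
    (hin : ∀ i : Fin k, dist (p (f i)) (zenoCenter x u (i : ℕ)) ≤ u)
    (hout : ∀ j : Fin n, dist (p j) x ≤ u * 3 ^ k → ∃ i : Fin k, j = f i)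
    (G : SimpleGraph (Fin n)) (hG : IsMST p G) :
    k - 1 ≤ interAt p G (p (f ⟨0, hk⟩)) ∧ k - 1 ≤ interG p G := by
  have key : ∀ i : ℕ, (hik : i < k) → i + 1 < k →
      dist (p (f ⟨0, hk⟩)) (p (f ⟨i, hik⟩)) ≤ rad p G (f ⟨i, hik⟩) := by
    intro i hik hik1
    rcases Nat.eq_zero_or_pos i with rfl | hi
    · have he : dist (p (f ⟨0, hk⟩)) (p (f ⟨0, hik⟩)) = 0 := by
        have h0 : (⟨0, hik⟩ : Fin k) = (⟨0, hk⟩ : Fin k) := rfl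
        rw [h0, dist_self]
      rw [he]
      exact rad_nonneg p G _
    · exact good hu hf hin hout hG i hi (by omega) hk hik
  have hcard : k - 1 ≤ interAt p G (p (f ⟨0, hk⟩)) := by
    rcases Nat.eq_zero_or_pos (k - 1) with h0 | hpos
    · rw [h0]; exact Nat.zero_le _
    · have hkk : k - 1 ≤ k := Nat.sub_le k 1
      have hginj : Function.Injective (fun a : Fin (k-1) => f (Fin.castLE hkk a)) := by
        intro a b hab
        have h2 := congrArg Fin.val (hf hab)
        exact Fin.ext h2
      have hsub : Finset.univ.image (fun a : Fin (k-1) => f (Fin.castLE hkk a)) ⊆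
          Finset.univ.filter (fun i => dist (p (f ⟨0, hk⟩)) (p i) ≤ rad p G i) := by
        intro b hb
        rw [Finset.mem_image] at hb
        obtain ⟨a, -, rfl⟩ := hb
        rw [Finset.mem_filter]
        refine ⟨Finset.mem_univ _, ?_⟩
        have ha := a.isLt
        exact key (a : ℕ) (by omega) (by omega)
      calc k - 1 = (Finset.univ.image (fun a : Fin (k-1) => f (Fin.castLE hkk a))).card := by
            rw [Finset.card_image_of_injective _ hginj, Finset.card_univ, Fintype.card_fin]
      _ ≤ _ := Finset.card_le_card hsub
  exact ⟨hcard, le_trans hcard (Finset.le_sup (f := fun i => interAt p G (p i))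
    (Finset.mem_univ (f ⟨0, hk⟩)))⟩
end
end
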